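/- arXiv:0707.0155 — 4 statements merged into one kernel-verified Lean document; each statement's English description precedes it below -/
import Mathlib

section
/- Let A_n be a cyclic group of order n generated by a, and let S ⊆ A_n \ {1} be closed under inverses. If the Cayley graph Cay(A_n,S) is balanced and both a and a^3 lie in S, then Cay(A_n,S) is the complete bipartite graph K_{n/2,n/2}; equivalently, S = A_n \ ⟨a^2⟩. -/
open SimpleGraph in
/-- A closed walk is an induced (chordless) cycle: it is a cycle and every edge of the
graph between vertices of the cycle is an edge of the cycle. -/
def IsInducedCycle {V : Type*} {G : SimpleGraph V} {v : V} (c : G.Walk v v) : Prop :=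
  c.IsCycle ∧ ∀ x ∈ c.support, ∀ y ∈ c.support, G.Adj x y → s(x, y) ∈ c.edges

/-- A graph is balanced: bipartite (2-colorable) and every induced cycle has length
divisible by 4 (equivalently, no induced cycle of length ≡ 2 mod 4). -/
def BalancedGraph {V : Type*} (G : SimpleGraph V) : Prop :=
  G.Colorable 2 ∧ ∀ (v : V) (c : G.Walk v v), IsInducedCycle c → 4 ∣ c.length
/-- The Cayley graph of a group `G` with connection set `S` (assumed symmetric and
not containing the identity in all statements): `g ~ h` iff `g * h⁻¹ ∈ S`. -/
def cayley {G : Type*} [Group G] (S : Set G) : SimpleGraph G where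
  Adj g h := g ≠ h ∧ (g * h⁻¹ ∈ S ∨ h * g⁻¹ ∈ S)
  symm := ⟨fun _ _ ⟨hne, hm⟩ => ⟨hne.symm, hm.symm⟩⟩
  loopless := ⟨fun _ h => h.1 rfl⟩

namespace BalAux
open SimpleGraph

variable {V : Type*} {Γ : SimpleGraph V}

def upWalk (f : ℕ → V) : (j : ℕ) → (∀ i, i < j → Γ.Adj (f i) (f (i+1))) → Γ.Walk (f 0) (f j)
  | 0, _ => SimpleGraph.Walk.nil
  | (j+1), h => (upWalk f j (fun i hi => h i (by omega))).concat (h j (by omega))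

lemma upWalk_support (f : ℕ → V) : ∀ (j : ℕ) (h : ∀ i, i < j → Γ.Adj (f i) (f (i+1))),
    (upWalk f j h).support = (List.range (j+1)).map f
  | 0, h => by simp [upWalk, List.range_succ]
  | (j+1), h => by
      rw [upWalk, Walk.support_concat, upWalk_support f j]
      simp [List.range_succ]

lemma upWalk_edges (f : ℕ → V) : ∀ (j : ℕ) (h : ∀ i, i < j → Γ.Adj (f i) (f (i+1))),
    (upWalk f j h).edges = (List.range j).map (fun i => s(f i, f (i+1)))
  | 0, h => by simp [upWalk, List.range_succ]
  | (j+1), h => by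
      rw [upWalk, Walk.edges_concat, upWalk_edges f j]
      simp [List.range_succ]

lemma upWalk_length (f : ℕ → V) : ∀ (j : ℕ) (h : ∀ i, i < j → Γ.Adj (f i) (f (i+1))),
    (upWalk f j h).length = j
  | 0, h => by simp [upWalk, List.range_succ]
  | (j+1), h => by rw [upWalk, Walk.length_concat, upWalk_length f j]

lemma cycle_contra (hbal : BalancedGraph Γ) (f : ℕ → V) (Q : ℕ) (hQ3 : 3 ≤ Q)
    (hQmod : (Q + 1) % 4 = 2)
    (hinj : ∀ i, i ≤ Q → ∀ j, j ≤ Q → f i = f j → i = j)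
    (hadj : ∀ i, i < Q → Γ.Adj (f i) (f (i+1)))
    (hadjQ : Γ.Adj (f Q) (f 0))
    (hchord : ∀ i, i ≤ Q → ∀ j, j ≤ Q → Γ.Adj (f i) (f j) →
      j = i + 1 ∨ i = j + 1 ∨ (i = 0 ∧ j = Q) ∨ (i = Q ∧ j = 0)) : False := by
  obtain ⟨K, rfl⟩ : ∃ K, Q = K + 1 := ⟨Q - 1, by omega⟩
  set f' : ℕ → V := fun i => f (i + 1) with hf'
  have hadj' : ∀ i, i < K → Γ.Adj (f' i) (f' (i+1)) := fun i hi => hadj (i+1) (by omega)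
  set p1 : Γ.Walk (f 1) (f (K+1)) := upWalk f' K hadj' with hp1
  set p : Γ.Walk (f 1) (f 0) := p1.concat hadjQ with hp
  have hsup : p.support = ((List.range (K+1)).map f').concat (f 0) := by
    rw [hp, Walk.support_concat, hp1, upWalk_support, List.concat_eq_append]
  have hedg : p.edges = ((List.range K).map (fun i => s(f' i, f' (i+1)))).concat s(f (K+1), f 0) := by
    rw [hp, Walk.edges_concat, hp1, upWalk_edges]
  have hpath : p.IsPath := by
    rw [Walk.isPath_def, hsup, List.concat_eq_append]
    rw [List.nodup_append]
    refine ⟨?_, List.nodup_singleton _, ?_⟩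
    · refine List.Nodup.map_on ?_ List.nodup_range
      intro i hi j hj hij
      simp only [List.mem_range] at hi hj
      have := hinj (i+1) (by omega) (j+1) (by omega) hij
      omega
    · intro x hx y hy hxy
      simp only [List.mem_singleton] at hy
      subst hy hxy
      simp only [List.mem_map, List.mem_range] at hx
      obtain ⟨i, hi, hfi⟩ := hx
      have := hinj (i+1) (by omega) 0 (by omega) hfi
      omega
  have hne : s(f 0, f 1) ∉ p.edges := by
    rw [hedg, List.concat_eq_append]
    intro hmem
    rw [List.mem_append] at hmem
    rcases hmem with hmem | hmem
    · simp only [List.mem_map, List.mem_range] at hmem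
      obtain ⟨i, hi, hfi⟩ := hmem
      rw [Sym2.eq_iff] at hfi
      rcases hfi with ⟨h1, h2⟩ | ⟨h1, h2⟩
      · have := hinj (i+1) (by omega) 0 (by omega) h1; omega
      · have := hinj (i+2) (by omega) 0 (by omega) h2; omega
    · simp only [List.mem_singleton] at hmem
      rw [Sym2.eq_iff] at hmem
      rcases hmem with ⟨h1, h2⟩ | ⟨h1, h2⟩
      · have := hinj (K+1) (by omega) 0 (by omega) h1.symm; omega
      · have := hinj (K+1) (by omega) 1 (by omega) h2.symm; omega
  set c : Γ.Walk (f 0) (f 0) := Walk.cons (hadj 0 (by omega)) p with hc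
  have hcyc : c.IsCycle := by
    rw [hc, Walk.cons_isCycle_iff]
    exact ⟨hpath, hne⟩
  have hcsup : ∀ x ∈ c.support, ∃ i, i ≤ K + 1 ∧ x = f i := by
    intro x hx
    rw [hc, Walk.support_cons, hsup, List.concat_eq_append] at hx
    simp only [List.mem_cons, List.mem_append, List.mem_map, List.mem_range,
      List.mem_singleton, List.not_mem_nil, or_false] at hx
    rcases hx with rfl | ⟨i, hi, rfl⟩ | rfl
    · exact ⟨0, by omega, rfl⟩
    · exact ⟨i + 1, by omega, rfl⟩
    · exact ⟨0, by omega, rfl⟩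
  have hcedge : ∀ i, i ≤ K → s(f i, f (i+1)) ∈ c.edges := by
    intro i hi
    rw [hc, Walk.edges_cons, hedg, List.concat_eq_append]
    rcases Nat.eq_zero_or_pos i with rfl | hpos
    · exact List.mem_cons_self
    · obtain ⟨i', rfl⟩ : ∃ i', i = i' + 1 := ⟨i - 1, by omega⟩
      refine List.mem_cons_of_mem _ (List.mem_append_left _ ?_)
      refine List.mem_map.2 ⟨i', List.mem_range.2 (by omega), rfl⟩
  have hcedgeQ : s(f (K+1), f 0) ∈ c.edges := by
    rw [hc, Walk.edges_cons, hedg, List.concat_eq_append]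
    exact List.mem_cons_of_mem _ (List.mem_append_right _ (List.mem_singleton_self _))
  have hind : IsInducedCycle c := by
    refine ⟨hcyc, ?_⟩
    intro x hx y hy hxy
    obtain ⟨i, hi, rfl⟩ := hcsup x hx
    obtain ⟨j, hj, rfl⟩ := hcsup y hy
    rcases hchord i hi j hj hxy with rfl | rfl | ⟨rfl, rfl⟩ | ⟨rfl, rfl⟩
    · exact hcedge i (by omega)
    · rw [Sym2.eq_swap]; exact hcedge j (by omega)
    · rw [Sym2.eq_swap]; exact hcedgeQ
    · exact hcedgeQ
  have hlen : c.length = K + 2 := by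
    rw [hc, Walk.length_cons, hp, Walk.length_concat, hp1, upWalk_length]
  have := hbal.2 (f 0) c hind
  rw [hlen] at this
  omega


def bVal (m : ℤ) : ℕ → ℤ
  | 0 => 0
  | 1 => m - 2
  | 2 => m - 1
  | _ => m

def cVal (m r : ℤ) : ℤ := if r + 4 ≤ 2*m - 2 then 1 else 3

def xVal (m r : ℤ) : ℤ :=
  if r + 3 - cVal m r - (m - 2) ≤ 1 then 1 else r + 3 - cVal m r - (m - 2)

def baseVal (m r : ℤ) : ℕ → ℤ
  | 0 => 0
  | 1 => 1
  | 2 => 1 + cVal m r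
  | 3 => 1 + cVal m r + (m - 2)
  | 4 => 1 + cVal m r + (m - 2) + xVal m r
  | _ => m + 2 + r

def Fg (m r : ℤ) (t : ℕ) (i : ℕ) : ℤ :=
  if i ≤ 4*t then (2*m-2) * ((i/4 : ℕ) : ℤ) + bVal m (i % 4)
  else (2*m-2) * (t : ℤ) + baseVal m r (i - 4*t)

lemma Fg_block (m r : ℤ) (t k s : ℕ) (hs : s < 4) (hle : 4*k+s ≤ 4*t) :
    Fg m r t (4*k+s) = (2*m-2)*(k:ℤ) + bVal m s := by
  have h1 : (4*k+s)/4 = k := by omega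
  have h2 : (4*k+s)%4 = s := by omega
  unfold Fg
  rw [if_pos hle, h1, h2]

lemma Fg_base (m r : ℤ) (t s : ℕ) (hs : 1 ≤ s) :
    Fg m r t (4*t+s) = (2*m-2)*(t:ℤ) + baseVal m r s := by
  have h2 : 4*t+s-4*t = s := by omega
  unfold Fg
  rw [if_neg (by omega), h2]

lemma base_facts (m r : ℤ) (hm : 5 ≤ m) (hmo : m % 2 = 1) (hr : 0 ≤ r)
    (hrlt : r ≤ 2*m - 4) (hre : r % 2 = 0) :
    (cVal m r = 1 ∨ cVal m r = 3) ∧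
    (xVal m r) % 2 = 1 ∧ 1 ≤ xVal m r ∧ xVal m r ≤ m - 2 ∧
    (r + 3 - cVal m r - xVal m r) % 2 = 1 ∧ 1 ≤ r + 3 - cVal m r - xVal m r ∧
    r + 3 - cVal m r - xVal m r ≤ m - 2 := by
  unfold xVal cVal
  split_ifs with h1 h2 h3 <;> omega

lemma exists_F (m M : ℕ) (hm5 : 5 ≤ m) (hmodd : m % 2 = 1) (hModd : M % 2 = 1)
    (hmM : m + 2 ≤ M) :
    ∃ (Q : ℕ) (F : ℕ → ℤ), Q % 4 = 1 ∧ 5 ≤ Q ∧ F 0 = 0 ∧ F Q = (M:ℤ) ∧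
      (∀ i, i < Q → (F (i+1) - F i) % 2 = 1 ∧ 1 ≤ F (i+1) - F i ∧ F (i+1) - F i ≤ (m:ℤ) - 2) ∧
      (∀ i, i + 3 ≤ Q → (m:ℤ) ≤ F (i+3) - F i) := by
  obtain ⟨t, r, hdm, hrlt⟩ : ∃ t r, (2*m-2) * t + r = M - (m+2) ∧ r < 2*m-2 :=
    ⟨(M - (m+2)) / (2*m-2), (M - (m+2)) % (2*m-2), Nat.div_add_mod _ _, Nat.mod_lt _ (by omega)⟩
  have hXeven : 2 ∣ (2*m-2) * t := Dvd.dvd.mul_right ⟨m-1, by omega⟩ t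
  have hMeq : M = (m+2) + ((2*m-2)*t + r) := by
    generalize (2*m-2)*t = X at hdm ⊢
    omega
  have hreven : r % 2 = 0 := by
    obtain ⟨c, hc⟩ := hXeven
    generalize (2*m-2)*t = X at hMeq hc
    omega
  -- integer versions
  set mz : ℤ := (m:ℤ) with hmz
  set rz : ℤ := (r:ℤ) with hrz
  have hmz5 : 5 ≤ mz := by omega
  have hmzo : mz % 2 = 1 := by omega
  have hrz0 : 0 ≤ rz := by positivity
  have hrzlt : rz ≤ 2*mz - 4 := by omega
  have hrze : rz % 2 = 0 := by omega
  have hMz : (M:ℤ) = mz + 2 + (2*mz-2)*(t:ℤ) + rz := by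
    have h1 : (M:ℤ) = (((m+2) + ((2*m-2)*t + r) : ℕ) : ℤ) := by exact_mod_cast congrArg (Nat.cast (R := ℤ)) hMeq
    rw [h1]
    push_cast [Nat.cast_sub (show 2 ≤ 2*m by omega)]
    ring
  obtain ⟨hc, hxo, hx1, hxm, hyo, hy1, hym⟩ :=
    base_facts mz rz hmz5 hmzo hrz0 hrzlt hrze
  refine ⟨4*t+5, Fg mz rz t, by omega, by omega, ?_, ?_, ?_, ?_⟩
  · show Fg mz rz t (4*0+0) = 0
    rw [Fg_block mz rz t 0 0 (by omega) (by omega)]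
    simp [bVal]
  · show Fg mz rz t (4*t+5) = (M:ℤ)
    rw [Fg_base mz rz t 5 (by omega)]
    show (2*mz-2) * (t:ℤ) + (mz + 2 + rz) = (M:ℤ)
    linarith [hMz]
  · -- step bounds
    intro i hi
    by_cases hA : i + 1 ≤ 4*t
    · obtain ⟨k, s, hs4, rfl⟩ : ∃ k s, s < 4 ∧ i = 4*k+s := ⟨i/4, i%4, by omega, by omega⟩
      rcases (show s = 0 ∨ s = 1 ∨ s = 2 ∨ s = 3 by omega) with rfl|rfl|rfl|rfl
      · have hd : Fg mz rz t (4*k+0+1) - Fg mz rz t (4*k+0) = mz - 2 := by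
          rw [show 4*k+0+1 = 4*k+1 by ring, Fg_block mz rz t k 1 (by omega) (by omega),
            Fg_block mz rz t k 0 (by omega) (by omega)]
          simp [bVal]; try ring
        rw [hd]; omega
      · have hd : Fg mz rz t (4*k+1+1) - Fg mz rz t (4*k+1) = 1 := by
          rw [show 4*k+1+1 = 4*k+2 by ring, Fg_block mz rz t k 2 (by omega) (by omega),
            Fg_block mz rz t k 1 (by omega) (by omega)]
          simp [bVal]; try ring
        rw [hd]; omega
      · have hd : Fg mz rz t (4*k+2+1) - Fg mz rz t (4*k+2) = 1 := by
          rw [show 4*k+2+1 = 4*k+3 by ring, Fg_block mz rz t k 3 (by omega) (by omega),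
            Fg_block mz rz t k 2 (by omega) (by omega)]
          simp [bVal]; try ring
        rw [hd]; omega
      · have hd : Fg mz rz t (4*k+3+1) - Fg mz rz t (4*k+3) = mz - 2 := by
          rw [show 4*k+3+1 = 4*(k+1)+0 by ring, Fg_block mz rz t (k+1) 0 (by omega) (by omega),
            Fg_block mz rz t k 3 (by omega) (by omega)]
          simp [bVal]
          push_cast
          try ring
        rw [hd]; omega
    · by_cases hB : i ≤ 4*t
      · have hieq : i = 4*t := by omega
        subst hieq
        have hd : Fg mz rz t (4*t+1) - Fg mz rz t (4*t) = 1 := by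
          rw [Fg_base mz rz t 1 (by omega),
            show (4*t : ℕ) = 4*t+0 by ring, Fg_block mz rz t t 0 (by omega) (by omega)]
          simp [bVal, baseVal]
        rw [hd]; omega
      · obtain ⟨s, hs1, hs4, rfl⟩ : ∃ s, 1 ≤ s ∧ s ≤ 4 ∧ i = 4*t+s :=
          ⟨i - 4*t, by omega, by omega, by omega⟩
        rcases (show s = 1 ∨ s = 2 ∨ s = 3 ∨ s = 4 by omega) with rfl|rfl|rfl|rfl
        · have hd : Fg mz rz t (4*t+1+1) - Fg mz rz t (4*t+1) = cVal mz rz := by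
            rw [show 4*t+1+1 = 4*t+2 by ring, Fg_base mz rz t 2 (by omega),
              Fg_base mz rz t 1 (by omega)]
            simp [baseVal]
          rw [hd]
          rcases hc with h|h <;> rw [h] <;> omega
        · have hd : Fg mz rz t (4*t+2+1) - Fg mz rz t (4*t+2) = mz - 2 := by
            rw [show 4*t+2+1 = 4*t+3 by ring, Fg_base mz rz t 3 (by omega),
              Fg_base mz rz t 2 (by omega)]
            simp [baseVal]; try ring
          rw [hd]; omega
        · have hd : Fg mz rz t (4*t+3+1) - Fg mz rz t (4*t+3) = xVal mz rz := by
            rw [show 4*t+3+1 = 4*t+4 by ring, Fg_base mz rz t 4 (by omega),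
              Fg_base mz rz t 3 (by omega)]
            simp [baseVal]
          rw [hd]; omega
        · have hd : Fg mz rz t (4*t+4+1) - Fg mz rz t (4*t+4) = rz + 3 - cVal mz rz - xVal mz rz := by
            rw [show 4*t+4+1 = 4*t+5 by ring, Fg_base mz rz t 5 (by omega),
              Fg_base mz rz t 4 (by omega)]
            simp [baseVal]; try ring
          rw [hd]; omega
  · -- window bounds
    intro i hi
    by_cases hA : i + 3 ≤ 4*t
    · obtain ⟨k, s, hs4, rfl⟩ : ∃ k s, s < 4 ∧ i = 4*k+s := ⟨i/4, i%4, by omega, by omega⟩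
      rcases (show s = 0 ∨ s = 1 ∨ s = 2 ∨ s = 3 by omega) with rfl|rfl|rfl|rfl
      · have hd : Fg mz rz t (4*k+0+3) - Fg mz rz t (4*k+0) = mz := by
          rw [show 4*k+0+3 = 4*k+3 by ring, Fg_block mz rz t k 3 (by omega) (by omega),
            Fg_block mz rz t k 0 (by omega) (by omega)]
          simp [bVal]
        rw [hd]
      · have hd : Fg mz rz t (4*k+1+3) - Fg mz rz t (4*k+1) = mz := by
          rw [show 4*k+1+3 = 4*(k+1)+0 by ring, Fg_block mz rz t (k+1) 0 (by omega) (by omega),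
            Fg_block mz rz t k 1 (by omega) (by omega)]
          simp [bVal]
          push_cast
          try ring
        rw [hd]
      · have hd : Fg mz rz t (4*k+2+3) - Fg mz rz t (4*k+2) = 2*mz - 3 := by
          rw [show 4*k+2+3 = 4*(k+1)+1 by ring, Fg_block mz rz t (k+1) 1 (by omega) (by omega),
            Fg_block mz rz t k 2 (by omega) (by omega)]
          simp [bVal]
          push_cast
          try ring
        rw [hd]; omega
      · have hd : Fg mz rz t (4*k+3+3) - Fg mz rz t (4*k+3) = 2*mz - 3 := by
          rw [show 4*k+3+3 = 4*(k+1)+2 by ring, Fg_block mz rz t (k+1) 2 (by omega) (by omega),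
            Fg_block mz rz t k 3 (by omega) (by omega)]
          simp [bVal]
          push_cast
          try ring
        rw [hd]; omega
    · by_cases hB : i ≤ 4*t
      · rcases (show i = 4*t ∨ i + 1 = 4*t ∨ i + 2 = 4*t by omega) with h|h|h
        · subst h
          have hd : Fg mz rz t (4*t+3) - Fg mz rz t (4*t) = cVal mz rz + mz - 1 := by
            rw [Fg_base mz rz t 3 (by omega),
              show (4*t : ℕ) = 4*t+0 by ring, Fg_block mz rz t t 0 (by omega) (by omega)]
            simp [bVal, baseVal]; try ring
          rw [hd]; omega
        · obtain ⟨t', rfl⟩ : ∃ t', t = t' + 1 := ⟨t - 1, by omega⟩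
          have hieq : i = 4*t'+3 := by omega
          subst hieq
          have hd : Fg mz rz (t'+1) (4*t'+3+3) - Fg mz rz (t'+1) (4*t'+3) = mz - 1 + cVal mz rz := by
            rw [show 4*t'+3+3 = 4*(t'+1)+2 by ring, Fg_base mz rz (t'+1) 2 (by omega),
              Fg_block mz rz (t'+1) t' 3 (by omega) (by omega)]
            simp [bVal, baseVal]
            push_cast
            try ring
          rw [hd]; omega
        · obtain ⟨t', rfl⟩ : ∃ t', t = t' + 1 := ⟨t - 1, by omega⟩
          have hieq : i = 4*t'+2 := by omega
          subst hieq
          have hd : Fg mz rz (t'+1) (4*t'+2+3) - Fg mz rz (t'+1) (4*t'+2) = mz := by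
            rw [show 4*t'+2+3 = 4*(t'+1)+1 by ring, Fg_base mz rz (t'+1) 1 (by omega),
              Fg_block mz rz (t'+1) t' 2 (by omega) (by omega)]
            simp [bVal, baseVal]
            push_cast
            try ring
          rw [hd]
      · obtain ⟨s, hs1, hs4, rfl⟩ : ∃ s, 1 ≤ s ∧ s ≤ 2 ∧ i = 4*t+s :=
          ⟨i - 4*t, by omega, by omega, by omega⟩
        rcases (show s = 1 ∨ s = 2 by omega) with rfl|rfl
        · have hd : Fg mz rz t (4*t+1+3) - Fg mz rz t (4*t+1) = cVal mz rz + (mz - 2) + xVal mz rz := by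
            rw [show 4*t+1+3 = 4*t+4 by ring, Fg_base mz rz t 4 (by omega),
              Fg_base mz rz t 1 (by omega)]
            simp [baseVal]; try ring
          rw [hd]; omega
        · have hd : Fg mz rz t (4*t+2+3) - Fg mz rz t (4*t+2) =
              (mz - 2) + xVal mz rz + (rz + 3 - cVal mz rz - xVal mz rz) := by
            rw [show 4*t+2+3 = 4*t+5 by ring, Fg_base mz rz t 5 (by omega),
              Fg_base mz rz t 2 (by omega)]
            simp [baseVal]; try ring
          rw [hd]; omega


lemma no_bad_F {G : Type*} [Group G] (S : Set G) (a : G) (n m M : ℕ)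
    (hbal : BalancedGraph (cayley S))
    (horder : orderOf a = n)
    (hm5 : 5 ≤ m) (hmM : m + 2 ≤ M) (hMn : M + m ≤ n + 2)
    (hmodd : m % 2 = 1) (hModd : M % 2 = 1)
    (hsmall : ∀ k : ℤ, k % 2 = 1 → 1 ≤ k → k ≤ (m:ℤ) - 2 → a ^ k ∈ S)
    (hMmem : a ^ (M:ℤ) ∈ S)
    (hband : ∀ k : ℤ, k % 2 = 1 → (m:ℤ) ≤ k → k ≤ (M:ℤ) - 2 → a ^ k ∉ S)
    (heven : ∀ k : ℤ, k % 2 = 0 → a ^ k ∉ S)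
    (hinvS : ∀ s ∈ S, s⁻¹ ∈ S) : False := by
  obtain ⟨Q, F, hQ4, hQ5, hF0, hFQ, hstep, hwin⟩ := exists_F m M hm5 hmodd hModd hmM
  -- lower bounds on increments
  have lb : ∀ j, j ≤ Q → ∀ i, i ≤ j → (j:ℤ) - (i:ℤ) ≤ F j - F i := by
    intro j
    induction j with
    | zero => intro _ i hi; have : i = 0 := by omega
              subst this; simp
    | succ j ih =>
        intro hj i hi
        rcases Nat.lt_or_ge i (j+1) with h | h
        · have h1 := (hstep j (by omega)).2.1
          have h2 := ih (by omega) i (by omega)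
          push_cast
          push_cast at h2
          linarith
        · have : i = j + 1 := by omega
          subst this; simp
  have par : ∀ j, j ≤ Q → ∀ i, i ≤ j → (F j - F i) % 2 = ((j:ℤ) - (i:ℤ)) % 2 := by
    intro j
    induction j with
    | zero => intro _ i hi; have : i = 0 := by omega
              subst this; simp
    | succ j ih =>
        intro hj i hi
        rcases Nat.lt_or_ge i (j+1) with h | h
        · have h1 := (hstep j (by omega)).1
          have h2 := ih (by omega) i (by omega)
          push_cast
          push_cast at h2
          omega
        · have : i = j + 1 := by omega
          subst this; simp
  have hFnn : ∀ i, i ≤ Q → 0 ≤ F i ∧ F i ≤ (M:ℤ) := by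
    intro i hi
    have h1 := lb i hi 0 (by omega)
    have h2 := lb Q (le_refl _) i hi
    rw [hF0] at h1
    rw [hFQ] at h2
    push_cast at h1 h2
    constructor
    · have : (0:ℤ) ≤ (i:ℤ) := by positivity
      linarith
    · have : (0:ℤ) ≤ (Q:ℤ) - (i:ℤ) := by
        have : (i:ℤ) ≤ (Q:ℤ) := by exact_mod_cast hi
        linarith
      linarith
  have hzpow_ne : ∀ x y : ℤ, 0 ≤ x → x < y → y ≤ (M:ℤ) → a ^ x ≠ a ^ y := by
    intro x y hx hxy hyM heq
    have h1 : a ^ (y - x) = 1 := by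
      rw [zpow_sub, ← heq]
      group
    have hdvd : ((orderOf a : ℤ)) ∣ (y - x) := orderOf_dvd_iff_zpow_eq_one.2 h1
    rw [horder] at hdvd
    have := Int.le_of_dvd (by omega) hdvd
    omega
  have adjE : ∀ u v : ℤ, (cayley S).Adj (a^u) (a^v) → a ^ (v - u) ∈ S := by
    rintro u v ⟨hne, h | h⟩
    · have h1 : a^(u-v) ∈ S := by rw [zpow_sub]; exact h
      have h2 := hinvS _ h1
      rw [← zpow_neg] at h2
      simpa [neg_sub] using h2
    · rw [← zpow_sub] at h
      exact h
  set f : ℕ → G := fun i => a ^ (F i) with hf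
  have key : ∀ i j, i ≤ Q → j ≤ Q → i < j → (cayley S).Adj (f i) (f j) →
      j = i + 1 ∨ (i = 0 ∧ j = Q) := by
    intro i j hi hj hij hadj
    have hmem : a ^ (F j - F i) ∈ S := adjE (F i) (F j) hadj
    have hlb := lb j hj i (le_of_lt hij)
    have hpar := par j hj i (le_of_lt hij)
    have hub1 := lb i hi 0 (by omega)
    have hub2 := lb Q (le_refl _) j hj
    rw [hF0] at hub1
    rw [hFQ] at hub2
    push_cast at hub1 hub2
    -- parity of j - i
    rcases Nat.even_or_odd (j - i) with he | ho
    · exfalso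
      have hpe : (F j - F i) % 2 = 0 := by
        rw [hpar]
        obtain ⟨c, hc⟩ := he
        have : (j:ℤ) - (i:ℤ) = 2*c := by push_cast; omega
        omega
      exact heven _ hpe hmem
    · rcases Nat.eq_or_lt_of_le (Nat.succ_le_of_lt hij) with h1 | h1
      · left; omega
      · -- j ≥ i + 2, and odd gap so j ≥ i + 3
        have hj3 : i + 3 ≤ j := by
          rcases ho with ⟨c, hc⟩
          omega
        by_cases h0 : i = 0 ∧ j = Q
        · right; exact h0
        · exfalso
          have hgm : (m:ℤ) ≤ F j - F i := by
            have hw := hwin i (by omega)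
            have hmono := lb j hj (i+3) hj3
            have : (0:ℤ) ≤ (j:ℤ) - ((i:ℕ)+3 : ℕ) := by
              have : ((i+3:ℕ):ℤ) ≤ (j:ℤ) := by exact_mod_cast hj3
              push_cast at this ⊢
              linarith
            push_cast at hmono
            linarith
          have hub : F j - F i ≤ (M:ℤ) - 1 := by
            have hQi : ¬(i = 0 ∧ j = Q) := h0
            have h2 : 1 ≤ (i:ℤ) + ((Q:ℤ) - (j:ℤ)) := by
              have hji : (j:ℤ) ≤ (Q:ℤ) := by exact_mod_cast hj
              by_cases hi0 : i = 0
              · have : j ≠ Q := fun hh => h0 ⟨hi0, hh⟩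
                have : (j:ℤ) < (Q:ℤ) := by
                  have : j < Q := by omega
                  exact_mod_cast this
                subst hi0
                push_cast
                linarith
              · have : (1:ℤ) ≤ (i:ℤ) := by
                  have : 1 ≤ i := by omega
                  exact_mod_cast this
                linarith
            linarith
          have hodd : (F j - F i) % 2 = 1 := by
            rw [hpar]
            rcases ho with ⟨c, hc⟩
            have : (j:ℤ) - (i:ℤ) = 2*c + 1 := by push_cast; omega
            omega
          have hub' : F j - F i ≤ (M:ℤ) - 2 := by omega
          exact hband _ hodd hgm hub' hmem
  refine cycle_contra hbal f Q (by omega) (by omega) ?_ ?_ ?_ ?_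
  · -- injectivity
    intro i hi j hj hfij
    by_contra hne
    rcases Nat.lt_or_ge i j with h | h
    · have h1 := lb j hj i (le_of_lt h)
      exact hzpow_ne (F i) (F j) (hFnn i hi).1 (by
        have : (0:ℤ) < (j:ℤ) - i := by
          have : (i:ℤ) < (j:ℤ) := by exact_mod_cast h
          linarith
        linarith) (hFnn j hj).2 hfij
    · have h : j < i := by omega
      have h1 := lb i hi j (le_of_lt h)
      exact hzpow_ne (F j) (F i) (hFnn j hj).1 (by
        have : (0:ℤ) < (i:ℤ) - j := by
          have : (j:ℤ) < (i:ℤ) := by exact_mod_cast h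
          linarith
        linarith) (hFnn i hi).2 hfij.symm
  · -- adjacency along the path
    intro i hi
    have hs := hstep i hi
    refine ⟨?_, Or.inr ?_⟩
    · exact hzpow_ne (F i) (F (i+1)) (hFnn i (by omega)).1 (by linarith [hs.2.1])
        (hFnn (i+1) (by omega)).2
    · rw [← zpow_sub]
      exact hsmall _ hs.1 hs.2.1 hs.2.2
  · -- closing edge
    refine ⟨?_, Or.inl ?_⟩
    · intro hh
      exact hzpow_ne (F 0) (F Q) (by rw [hF0]) (by rw [hF0, hFQ]; exact_mod_cast (by omega : 0 < M))
        (le_of_eq hFQ) hh.symm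
    · rw [← zpow_sub, hF0, hFQ, sub_zero]
      exact hMmem
  · -- chords
    intro i hi j hj hadj
    rcases lt_trichotomy i j with h | h | h
    · rcases key i j hi hj h hadj with h1 | h1
      · left; exact h1
      · right; right; left; exact h1
    · exfalso; subst h; exact hadj.1 rfl
    · rcases key j i hj hi h hadj.symm with h1 | h1
      · right; left; exact h1
      · right; right; right; exact ⟨h1.2, h1.1⟩


lemma cayley_adj_mem {G : Type*} [Group G] {S : Set G} (hinvS : ∀ s ∈ S, s⁻¹ ∈ S)
    (a : G) (u v : ℤ) (h : (cayley S).Adj (a^u) (a^v)) : a ^ (v - u) ∈ S := by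
  obtain ⟨hne, h | h⟩ := h
  · have h1 : a^(u-v) ∈ S := by rw [zpow_sub]; exact h
    have h2 := hinvS _ h1
    rw [← zpow_neg] at h2
    simpa [neg_sub] using h2
  · rw [← zpow_sub] at h
    exact h

lemma odd_mem {G : Type*} [Group G] [Fintype G] (S : Set G) (a : G) (n : ℕ)
    (hcard : Fintype.card G = n) (hgen : ∀ g : G, g ∈ Subgroup.zpowers a)
    (hid : (1 : G) ∉ S) (hinv : ∀ s ∈ S, s⁻¹ ∈ S)
    (hbal : BalancedGraph (cayley S)) (ha : a ∈ S) (ha3 : a ^ (3:ℕ) ∈ S) :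
    orderOf a = n ∧ n % 2 = 0 ∧ (∀ k : ℤ, k % 2 = 0 → a ^ k ∉ S) ∧
      (∀ k : ℤ, k % 2 = 1 → a ^ k ∈ S) := by
  classical
  have horder : orderOf a = n := by
    rw [orderOf_eq_card_of_forall_mem_zpowers hgen, Nat.card_eq_fintype_card, hcard]
  have npos : 0 < n := by
    rw [← hcard]
    exact Fintype.card_pos
  have hnz : (0:ℤ) < (n:ℤ) := by exact_mod_cast npos
  have ha1 : a ≠ 1 := by rintro rfl; exact hid ha
  have hinv' : ∀ j : ℤ, a ^ j ∈ S → a ^ (-j) ∈ S := fun j h => by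
    rw [zpow_neg]; exact hinv _ h
  have hP1 : a ^ (1:ℤ) ∈ S := by simpa using ha
  have hP3 : a ^ (3:ℤ) ∈ S := by
    rw [show (3:ℤ) = ((3:ℕ):ℤ) by norm_num, zpow_natCast]
    exact ha3
  have hpow_n : a ^ ((n:ℕ):ℤ) = 1 := by
    rw [zpow_natCast, ← horder, pow_orderOf_eq_one]
  have hred : ∀ k : ℤ, a ^ k = a ^ (((k % (n:ℤ)).toNat : ℕ) : ℤ) := by
    intro k
    have h1 : 0 ≤ k % (n:ℤ) := Int.emod_nonneg k (by omega)
    have h2 : a ^ (k % ↑n + ↑n * (k / ↑n)) = a ^ k := by rw [Int.emod_add_mul_ediv]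
    rw [← h2, zpow_add, zpow_mul, hpow_n, one_zpow, mul_one, Int.toNat_of_nonneg h1]
  have hredlt : ∀ k : ℤ, (k % (n:ℤ)).toNat < n := by
    intro k
    have h2 : k % (n:ℤ) < n := Int.emod_lt_of_pos k hnz
    omega
  -- coloring
  obtain ⟨C⟩ := hbal.1
  have adj_step : ∀ j : ℤ, (cayley S).Adj (a^j) (a^(j+1)) := by
    intro j
    constructor
    · intro h
      have h1 : a ^ ((j+1) - j) = 1 := by rw [zpow_sub, ← h]; group
      simp only [add_sub_cancel_left, zpow_one] at h1
      exact ha1 h1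
    · right
      rw [← zpow_sub]
      simpa using hP1
  have col_step : ∀ j : ℤ, C (a^j) ≠ C (a^(j+1)) := fun j => C.valid (adj_step j)
  have hC1a : C 1 ≠ C a := by
    have := col_step 0
    simpa using this
  have fin2' : ∀ x u v : Fin 2, u ≠ v → x ≠ u → x = v := by decide
  have colNat : ∀ k : ℕ, (k % 2 = 0 → C (a^(k:ℤ)) = C 1) ∧ (k % 2 = 1 → C (a^(k:ℤ)) = C a) := by
    intro k
    induction k with
    | zero => simp
    | succ k ih =>
        have hstep : C (a^(k:ℤ)) ≠ C (a^((k:ℤ)+1)) := col_step k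
        have hcast : ((k+1 : ℕ) : ℤ) = (k:ℤ)+1 := by push_cast; ring
        constructor
        · intro hk
          have h2 := ih.2 (by omega)
          rw [hcast]
          refine fin2' _ _ _ hC1a.symm ?_
          rw [← h2]
          exact fun hh => hstep hh.symm
        · intro hk
          have h2 := ih.1 (by omega)
          rw [hcast]
          refine fin2' _ _ _ hC1a ?_
          rw [← h2]
          exact fun hh => hstep hh.symm
  have hneven : n % 2 = 0 := by
    by_contra hodd
    have h1 : C (a^((n:ℕ):ℤ)) = C a := (colNat n).2 (by omega)
    rw [hpow_n] at h1
    exact hC1a h1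
  have hparmod : ∀ k : ℤ, (k % (n:ℤ)) % 2 = k % 2 := by
    intro k
    exact Int.emod_emod_of_dvd k (by omega)
  have heven : ∀ k : ℤ, k % 2 = 0 → a ^ k ∉ S := by
    intro k hk hmem
    have hne : a ^ k ≠ 1 := by
      intro h; rw [h] at hmem; exact hid hmem
    have hadj : (cayley S).Adj (a^k) 1 := ⟨hne, Or.inl (by simpa using hmem)⟩
    have hcol := C.valid hadj
    set k' : ℕ := (k % (n:ℤ)).toNat with hk'
    have hpk' : k' % 2 = 0 := by
      have h1 := hparmod k
      have h2 : 0 ≤ k % (n:ℤ) := Int.emod_nonneg k (by omega)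
      omega
    have : C (a^k) = C 1 := by
      rw [hred k]
      exact (colNat k').1 hpk'
    exact hcol this
  refine ⟨horder, hneven, heven, ?_⟩
  -- the hard direction
  by_contra hcon
  push_neg at hcon
  obtain ⟨j0, hj0odd, hj0S⟩ := hcon
  set T : ℕ → Prop := fun k => k % 2 = 1 ∧ a ^ (k:ℤ) ∉ S with hT
  have hTk0 : T ((j0 % (n:ℤ)).toNat) := by
    constructor
    · have h1 := hparmod j0
      have h2 : 0 ≤ j0 % (n:ℤ) := Int.emod_nonneg j0 (by omega)
      omega
    · rw [← hred j0]; exact hj0S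
  have hfind : ∃ k, T k := ⟨_, hTk0⟩
  set m := Nat.find hfind with hmdef
  obtain ⟨hmodd, hmS⟩ : T m := Nat.find_spec hfind
  have hmin : ∀ k, k < m → k % 2 = 1 → a ^ (k:ℤ) ∈ S := by
    intro k hk hkodd
    by_contra hns
    exact Nat.find_min hfind hk ⟨hkodd, hns⟩
  have hmlt : m < n := by
    have := Nat.find_min' hfind hTk0
    have := hredlt j0
    omega
  have hm1 : m ≠ 1 := by
    intro h
    apply hmS
    rw [h]
    simpa using hP1
  have hm3 : m ≠ 3 := by
    intro h
    apply hmS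
    rw [h]
    exact_mod_cast hP3
  have hm5 : 5 ≤ m := by omega
  have hTnm : T (n - m) := by
    constructor
    · omega
    · intro hmem
      apply hmS
      have hcast : ((n - m : ℕ) : ℤ) = (n:ℤ) - m := by
        have : m ≤ n := by omega
        push_cast [this]
        ring
      rw [hcast] at hmem
      have h1 : a ^ ((n:ℤ) - m) = a ^ (-(m:ℤ)) := by
        rw [sub_eq_add_neg, zpow_add, hpow_n, one_mul]
      rw [h1] at hmem
      have := hinv' _ hmem
      simpa using this
  have hm2n : 2 * m ≤ n := by
    have := Nat.find_min' hfind hTnm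
    omega
  set MT : ℕ → Prop := fun k => k % 2 = 1 ∧ m < k ∧ a ^ (k:ℤ) ∈ S with hMT
  have hMTw : MT (n - m + 2) := by
    refine ⟨by omega, by omega, ?_⟩
    have hcast : ((n - m + 2 : ℕ) : ℤ) = (n:ℤ) + (2 - (m:ℤ)) := by
      have : m ≤ n := by omega
      push_cast [this]
      ring
    rw [hcast, zpow_add, hpow_n, one_mul]
    have h1 : a ^ ((m:ℤ) - 2) ∈ S := by
      have h2 := hmin (m - 2) (by omega) (by omega)
      have hcast2 : ((m - 2 : ℕ) : ℤ) = (m:ℤ) - 2 := by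
        push_cast [show 2 ≤ m by omega]
        ring
      rw [hcast2] at h2
      exact h2
    have := hinv' _ h1
    simpa [neg_sub] using this
  have hfind2 : ∃ k, MT k := ⟨_, hMTw⟩
  set M := Nat.find hfind2 with hMdef
  obtain ⟨hModd, hmM, hMS⟩ : MT M := Nat.find_spec hfind2
  have hMmax : M ≤ n - m + 2 := Nat.find_min' hfind2 hMTw
  have hband : ∀ k : ℤ, k % 2 = 1 → (m:ℤ) ≤ k → k ≤ (M:ℤ) - 2 → a ^ k ∉ S := by
    intro k hk hkm hkM hmem
    have h0 : 0 ≤ k := by omega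
    set k' := k.toNat with hk'
    have hkeq : (k':ℤ) = k := Int.toNat_of_nonneg h0
    rcases Nat.eq_or_lt_of_le (show m ≤ k' by omega) with h | h
    · apply hmS
      rw [show ((m:ℕ):ℤ) = k by omega]
      exact hmem
    · refine Nat.find_min hfind2 (show k' < M by omega) ⟨by omega, h, ?_⟩
      rw [show ((k':ℕ):ℤ) = k by omega]
      exact hmem
  have hsmall : ∀ k : ℤ, k % 2 = 1 → 1 ≤ k → k ≤ (m:ℤ) - 2 → a ^ k ∈ S := by
    intro k hk h1 h2
    have := hmin k.toNat (by omega) (by omega)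
    rw [show ((k.toNat:ℕ):ℤ) = k by omega] at this
    exact this
  exact no_bad_F S a n m M hbal horder hm5 (by omega) (by omega) (by omega) (by omega)
    hsmall hMS hband heven hinv

end BalAux

namespace BalAux

def parSplit (h : ℕ) (k : Fin (2*h)) : Fin h ⊕ Fin h :=
  if (k:ℕ) % 2 = 0 then Sum.inl ⟨(k:ℕ)/2, by have := k.isLt; omega⟩
  else Sum.inr ⟨(k:ℕ)/2, by have := k.isLt; omega⟩

def parJoin (h : ℕ) : Fin h ⊕ Fin h → Fin (2*h)
  | .inl i => ⟨2*(i:ℕ), by have := i.isLt; omega⟩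
  | .inr i => ⟨2*(i:ℕ)+1, by have := i.isLt; omega⟩

def parEquiv (h : ℕ) : Fin (2*h) ≃ (Fin h ⊕ Fin h) where
  toFun := parSplit h
  invFun := parJoin h
  left_inv := by
    intro k
    unfold parSplit
    split_ifs with hk
    · unfold parJoin
      exact Fin.ext (by simp <;> omega)
    · unfold parJoin
      exact Fin.ext (by simp <;> omega)
  right_inv := by
    rintro (i | i)
    · unfold parJoin parSplit
      rw [if_pos (by simp <;> omega)]
      simp only [Sum.inl.injEq]
      exact Fin.ext (by simp <;> omega)
    · unfold parJoin parSplit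
      rw [if_neg (by simp <;> omega)]
      simp only [Sum.inr.injEq]
      exact Fin.ext (by simp <;> omega)

lemma parSplit_adj (h : ℕ) (u v : Fin (2*h)) :
    (completeBipartiteGraph (Fin h) (Fin h)).Adj (parSplit h u) (parSplit h v) ↔
      ¬((u:ℕ) % 2 = (v:ℕ) % 2) := by
  unfold parSplit
  split_ifs with h1 h2 h2 <;> simp [completeBipartiteGraph] <;> omega

end BalAux

set_option maxHeartbeats 1000000 in
open SimpleGraph in
/-- if `Cay(A_n,S)` is balanced and `a, a³ ∈ S` (for a generator `a`),
then `S = A_n \ ⟨a²⟩`, i.e. the graph is the complete bipartite graph `K_{n/2,n/2}`. -/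
theorem balanced_cayley_with_a_a3 {G : Type*} [Group G] [Fintype G] (n : ℕ) (a : G)
    (hcard : Fintype.card G = n) (hgen : ∀ g : G, g ∈ Subgroup.zpowers a)
    (S : Set G) (hid : (1 : G) ∉ S) (hinv : ∀ s ∈ S, s⁻¹ ∈ S)
    (hbal : BalancedGraph (cayley S)) (ha : a ∈ S) (ha3 : a ^ 3 ∈ S) :
    S = (↑(Subgroup.zpowers (a ^ 2)) : Set G)ᶜ ∧
      Nonempty (cayley S ≃g completeBipartiteGraph (Fin (n / 2)) (Fin (n / 2))) := by
  classical
  obtain ⟨horder, hneven, heven, hodd⟩ := BalAux.odd_mem S a n hcard hgen hid hinv hbal ha ha3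
  have npos : 0 < n := by rw [← hcard]; exact Fintype.card_pos
  have ha1 : a ≠ 1 := by rintro rfl; exact hid ha
  have hn1 : n ≠ 1 := by
    intro h
    rw [h] at horder
    exact ha1 (orderOf_eq_one_iff.1 horder)
  have hn2 : 2 ≤ n := by omega
  have hpow_n : a ^ ((n:ℕ):ℤ) = 1 := by
    rw [zpow_natCast, ← horder, pow_orderOf_eq_one]
  have hz2 : ∀ k : ℤ, a ^ k ∈ (Subgroup.zpowers (a ^ 2) : Set G) ↔ k % 2 = 0 := by
    intro k
    constructor
    · intro hzp
      obtain ⟨l, hl⟩ := Subgroup.mem_zpowers_iff.1 hzp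
      have h2 : a ^ (2*l) = a ^ k := by
        rw [← hl, ← zpow_natCast a 2, ← zpow_mul]
        norm_num
      have h1 : a ^ (2*l - k) = 1 := by rw [zpow_sub, h2]; group
      have hdvd := orderOf_dvd_iff_zpow_eq_one.2 h1
      rw [horder] at hdvd
      obtain ⟨c, hc⟩ := hdvd
      have hdvd2 : (2:ℤ) ∣ (n:ℤ) * c :=
        Dvd.dvd.mul_right (⟨(n/2 : ℕ), by push_cast; omega⟩ : (2:ℤ) ∣ (n:ℤ)) c
      obtain ⟨d, hd⟩ := hdvd2
      rw [hd] at hc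
      omega
    · intro hk
      refine Subgroup.mem_zpowers_iff.2 ⟨k / 2, ?_⟩
      rw [← zpow_natCast a 2, ← zpow_mul]
      congr 1
      omega
  have hSiff : ∀ k : ℤ, a ^ k ∈ S ↔ k % 2 = 1 := by
    intro k
    constructor
    · intro hx
      by_contra h
      exact heven k (by omega) hx
    · exact hodd k
  constructor
  · ext x
    obtain ⟨k, rfl⟩ := Subgroup.mem_zpowers_iff.1 (hgen x)
    rw [Set.mem_compl_iff, hSiff k]
    rw [hz2 k]
    omega
  -- the isomorphism
  obtain ⟨h, rfl⟩ : ∃ h, n = 2 * h := ⟨n / 2, by omega⟩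
  have hdiv : 2 * h / 2 = h := by omega
  rw [hdiv]
  have hinj : Function.Injective (fun k : Fin (2*h) => a ^ (k:ℕ)) := by
    intro k l hkl
    have := pow_injOn_Iio_orderOf (x := a) (by rw [horder]; exact Set.mem_Iio.2 k.isLt)
      (by rw [horder]; exact Set.mem_Iio.2 l.isLt) hkl
    exact Fin.ext this
  have hsurj : Function.Surjective (fun k : Fin (2*h) => a ^ (k:ℕ)) := by
    intro g
    obtain ⟨k, rfl⟩ := Subgroup.mem_zpowers_iff.1 (hgen g)
    have h1 : 0 ≤ k % ((2*h : ℕ):ℤ) := Int.emod_nonneg k (by exact_mod_cast (by omega : (2*h:ℕ) ≠ 0))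
    have h2 : k % ((2*h:ℕ):ℤ) < (2*h:ℕ) := Int.emod_lt_of_pos k (by exact_mod_cast npos)
    refine ⟨⟨(k % ((2*h:ℕ):ℤ)).toNat, by omega⟩, ?_⟩
    show a ^ (((k % ((2*h:ℕ):ℤ)).toNat : ℕ)) = a ^ k
    have h3 : a ^ (k % ((2*h:ℕ):ℤ) + ((2*h:ℕ):ℤ) * (k / ((2*h:ℕ):ℤ))) = a ^ k := by
      rw [Int.emod_add_mul_ediv]
    rw [← zpow_natCast a, Int.toNat_of_nonneg h1, ← h3, zpow_add, zpow_mul, hpow_n, one_zpow,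
      mul_one]
  set e1 : Fin (2*h) ≃ G := Equiv.ofBijective _ ⟨hinj, hsurj⟩ with he1
  refine ⟨⟨e1.symm.trans (BalAux.parEquiv h), ?_⟩⟩
  intro x y
  set i := e1.symm x with hi
  set j := e1.symm y with hj
  have hx : x = a ^ ((i:ℕ)) := by rw [hi]; exact (e1.apply_symm_apply x).symm
  have hy : y = a ^ ((j:ℕ)) := by rw [hj]; exact (e1.apply_symm_apply y).symm
  have hcay : (cayley S).Adj x y ↔ ¬((i:ℕ) % 2 = (j:ℕ) % 2) := by
    rw [hx, hy]
    constructor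
    · intro hadj
      have h1 : a ^ (((j:ℕ):ℤ) - ((i:ℕ):ℤ)) ∈ S := by
        exact BalAux.cayley_adj_mem hinv a ((i:ℕ):ℤ) ((j:ℕ):ℤ) (by
          rw [zpow_natCast, zpow_natCast]; exact hadj)
      have h2 := (hSiff _).1 h1
      omega
    · intro hpar
      constructor
      · intro heq
        have : (i:ℕ) = (j:ℕ) := congrArg Fin.val (hinj heq)
        omega
      · right
        rw [← zpow_natCast a (j:ℕ), ← zpow_natCast a (i:ℕ), ← zpow_sub]
        exact (hSiff _).2 (by omega)
  rw [hcay]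
  exact (BalAux.parSplit_adj h i j)
end

section
/- Let X be a bipartite graph with distinct vertices u, v having identical neighborhoods (non-trivial twins). Then X is balanced if and only if the induced subgraph X \ u obtained by deleting u is balanced. -/
open SimpleGraph

section Aux
variable {V : Type*} {G : SimpleGraph V}

lemma closed_mem_support_tail {y x : V} (d : G.Walk y y) (hd : ¬ d.Nil) :
    x ∈ d.support ↔ x ∈ d.support.tail := by
  cases d with
  | nil => simp at hd
  | cons h p =>
    simp only [Walk.support_cons, List.tail_cons, List.mem_cons]
    exact ⟨fun h' => h'.elim (fun h'' => h'' ▸ p.end_mem_support) id, Or.inr⟩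

lemma mem_support_rotate [DecidableEq V] {y x u : V} {c : G.Walk y y} (hc : c.IsCycle)
    (h : u ∈ c.support) : x ∈ (c.rotate u h).support ↔ x ∈ c.support := by
  rw [closed_mem_support_tail _ (hc.rotate h).not_nil, closed_mem_support_tail _ hc.not_nil]
  exact (c.support_rotate u h).perm.mem_iff

/-- Walk in `G` supported in `S` gives a walk in the induced subgraph. -/
def inducedWalk {S : Set V} : ∀ {x y : V} (p : G.Walk x y) (hp : ∀ z ∈ p.support, z ∈ S),
    (G.induce S).Walk ⟨x, hp x p.start_mem_support⟩ ⟨y, hp y p.end_mem_support⟩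
  | _, _, SimpleGraph.Walk.nil, _ => SimpleGraph.Walk.nil
  | x, y, @SimpleGraph.Walk.cons _ _ _ w _ h p, hp =>
      SimpleGraph.Walk.cons
        (show (G.induce S).Adj ⟨x, hp x (by simp)⟩ ⟨w, hp w (by simp)⟩ from h)
        (inducedWalk p fun z hz => hp z (by simp [hz]))

lemma map_inducedWalk {S : Set V} {x y : V} (p : G.Walk x y) (hp : ∀ z ∈ p.support, z ∈ S) :
    (inducedWalk p hp).map (SimpleGraph.Embedding.induce S).toHom = p := by
  induction p with
  | nil => rfl
  | cons h q ih =>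
    show SimpleGraph.Walk.cons _ _ = _
    rw [ih]
    rfl

lemma support_inducedWalk {S : Set V} {x y : V} (p : G.Walk x y)
    (hp : ∀ z ∈ p.support, z ∈ S) :
    (inducedWalk p hp).support.map Subtype.val = p.support := by
  conv_rhs => rw [← map_inducedWalk p hp]
  exact (Walk.support_map (SimpleGraph.Embedding.induce S).toHom (inducedWalk p hp)).symm

lemma edges_inducedWalk {S : Set V} {x y : V} (p : G.Walk x y)
    (hp : ∀ z ∈ p.support, z ∈ S) :
    (inducedWalk p hp).edges.map (Sym2.map Subtype.val) = p.edges := by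
  conv_rhs => rw [← map_inducedWalk p hp]
  exact (Walk.edges_map (SimpleGraph.Embedding.induce S).toHom (inducedWalk p hp)).symm

lemma length_inducedWalk {S : Set V} {x y : V} (p : G.Walk x y)
    (hp : ∀ z ∈ p.support, z ∈ S) : (inducedWalk p hp).length = p.length := by
  conv_rhs => rw [← map_inducedWalk p hp]
  exact (Walk.length_map _ _).symm

lemma isCycle_inducedWalk {S : Set V} {x : V} {p : G.Walk x x}
    (hp : ∀ z ∈ p.support, z ∈ S) (hc : p.IsCycle) : (inducedWalk p hp).IsCycle := by
  rw [← Walk.map_isCycle_iff_of_injective (f := (SimpleGraph.Embedding.induce S).toHom)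
    Subtype.val_injective, map_inducedWalk]
  exact hc

lemma isInducedCycle_map {W : Type*} {G' : SimpleGraph W}
    (f : G ↪g G') {w : V} {c : G.Walk w w} (hc : IsInducedCycle c) :
    IsInducedCycle (c.map f.toHom) := by
  refine ⟨(Walk.map_isCycle_iff_of_injective f.injective).2 hc.1, ?_⟩
  intro x hx y hy hadj
  rw [Walk.support_map, List.mem_map] at hx hy
  obtain ⟨x', hx', rfl⟩ := hx
  obtain ⟨y', hy', rfl⟩ := hy
  have hadj' : G.Adj x' y' := f.map_adj_iff.mp hadj
  rw [Walk.edges_map]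
  exact List.mem_map.2 ⟨s(x', y'), hc.2 x' hx' y' hy' hadj', by simp⟩

lemma isInducedCycle_inducedWalk {S : Set V} {w : V} {c : G.Walk w w}
    (hS : ∀ z ∈ c.support, z ∈ S) (hc : IsInducedCycle c) :
    IsInducedCycle (inducedWalk c hS) := by
  refine ⟨isCycle_inducedWalk hS hc.1, ?_⟩
  rintro ⟨x, hx⟩ hxs ⟨y, hy⟩ hys hadj
  have hxc : x ∈ c.support := by
    rw [← support_inducedWalk c hS]
    exact List.mem_map_of_mem (f := Subtype.val) hxs
  have hyc : y ∈ c.support := by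
    rw [← support_inducedWalk c hS]
    exact List.mem_map_of_mem (f := Subtype.val) hys
  have hGadj : G.Adj x y := hadj
  have he : s(x, y) ∈ c.edges := hc.2 x hxc y hyc hGadj
  rw [← edges_inducedWalk c hS, List.mem_map] at he
  obtain ⟨e', he', heq⟩ := he
  have : e' = s((⟨x, hx⟩ : S), (⟨y, hy⟩ : S)) := by
    apply Sym2.map.injective Subtype.val_injective
    rw [heq]
    rfl
  rwa [← this]

/-- Swapping non-adjacent twins preserves adjacency. -/
lemma swap_adj [DecidableEq V] {u v : V} (huv : u ≠ v) (h : ∀ x, G.Adj u x ↔ G.Adj v x)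
    {a b : V} (hab : G.Adj a b) : G.Adj (Equiv.swap u v a) (Equiv.swap u v b) := by
  have h' : ∀ x, G.Adj x u ↔ G.Adj x v := fun x => by rw [adj_comm, h, adj_comm]
  rw [Equiv.swap_apply_def, Equiv.swap_apply_def]
  split_ifs <;> subst_vars <;>
    first
      | exact hab
      | exact (h _).mp hab
      | exact (h _).mpr hab
      | exact (h' _).mp hab
      | exact (h' _).mpr hab
      | exact absurd hab (G.irrefl)
      | exact hab.symm
      | exact (h' _).mp ((h _).mp hab.symm)
      | exact (h' _).mpr ((h _).mpr hab.symm)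
      | exact (h _).mp ((h' _).mp hab)
      | exact (h _).mpr ((h' _).mpr hab)

/-- Swapping non-adjacent twins is a graph automorphism. -/
def twinIso [DecidableEq V] {u v : V} (huv : u ≠ v) (h : ∀ x, G.Adj u x ↔ G.Adj v x) :
    G ≃g G where
  toEquiv := Equiv.swap u v
  map_rel_iff' := by
    intro a b
    constructor
    · intro hab
      have := swap_adj huv h hab
      rwa [Equiv.swap_apply_self, Equiv.swap_apply_self] at this
    · exact swap_adj huv h

lemma twin_cycle_length_eq_four {u v : V} (huv : u ≠ v) (h : ∀ x, G.Adj u x ↔ G.Adj v x)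
    {c : G.Walk u u} (hc : IsInducedCycle c) (hv : v ∈ c.support) : c.length = 4 := by
  have hnadj : ¬ G.Adj u v := fun hadj => G.irrefl ((h v).1 hadj)
  rcases c with _ | @⟨_, a, _, h₁, p⟩
  · exact absurd hc.1 Walk.IsCycle.not_of_nil
  obtain ⟨hp, he⟩ := (Walk.cons_isCycle_iff p h₁).mp hc.1
  have hau : a ≠ u := h₁.ne'
  have hvp : v ∈ p.support := by
    rcases (Walk.mem_support_iff _).mp hv with h' | h'
    · exact absurd h' huv.symm
    · simpa using h'
  have hav : a ≠ v := fun hh => hnadj (hh ▸ h₁)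
  have hva : G.Adj v a := (h a).1 h₁
  have hedge1 : s(v, a) ∈ (Walk.cons h₁ p).edges := hc.2 v hv a (by simp) hva
  rw [Walk.edges_cons, List.mem_cons] at hedge1
  have hedge1' : s(v, a) ∈ p.edges := by
    rcases hedge1 with heq | hm
    · rw [Sym2.eq_iff] at heq
      rcases heq with ⟨h3, _⟩ | ⟨h3, h4⟩
      · exact absurd h3 huv.symm
      · exact absurd h3 hav.symm
    · exact hm
  rcases p with _ | @⟨_, b, _, h₂, r⟩
  · exact absurd rfl hau
  obtain ⟨hp', hanr⟩ := (Walk.cons_isPath_iff h₂ r).mp hp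
  rw [Walk.edges_cons, List.mem_cons] at hedge1'
  have hbv : b = v := by
    rcases hedge1' with heq | hm
    · rw [Sym2.eq_iff] at heq
      rcases heq with ⟨h3, h4⟩ | ⟨h3, _⟩
      · exact absurd h3 hav.symm
      · exact h3.symm
    · exact absurd (r.snd_mem_support_of_mem_edges hm) hanr
  subst hbv
  rcases r with _ | @⟨_, d, _, h₃, r₂⟩
  · exact absurd rfl huv
  have hdu : d ≠ u := fun hh => hnadj (G.adj_symm (hh ▸ h₃))
  have hud : G.Adj u d := (h d).2 h₃
  have had : a ≠ d := fun hh => hanr (by simp [hh])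
  have hedge2 := hc.2 u (by simp) d (by simp) hud
  simp only [Walk.edges_cons, List.mem_cons] at hedge2
  rcases hedge2 with heq | heq | heq | hm
  · rw [Sym2.eq_iff] at heq
    rcases heq with ⟨_, h4⟩ | ⟨h3, _⟩
    · exact absurd h4.symm had
    · exact absurd h3.symm hau
  · rw [Sym2.eq_iff] at heq
    rcases heq with ⟨h3, _⟩ | ⟨h3, _⟩
    · exact absurd h3.symm hau
    · exact absurd h3 huv
  · rw [Sym2.eq_iff] at heq
    rcases heq with ⟨h3, _⟩ | ⟨h3, h4⟩
    · exact absurd h3 huv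
    · exact absurd h3.symm hdu
  · rcases r₂ with _ | @⟨_, e, _, h₄, r₃⟩
    · exact absurd rfl hdu
    obtain ⟨hp'', hvnr⟩ := (Walk.cons_isPath_iff h₃ _).mp hp'
    obtain ⟨hp''', hdnr⟩ := (Walk.cons_isPath_iff h₄ r₃).mp hp''
    rw [Walk.edges_cons, List.mem_cons] at hm
    rcases hm with heq | hm
    · rw [Sym2.eq_iff] at heq
      rcases heq with ⟨h3, _⟩ | ⟨h3, _⟩
      · exact absurd h3.symm hdu
      · subst h3
        have hr₃ : r₃ = Walk.nil := (Walk.isPath_iff_eq_nil (p := r₃)).mp hp'''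
        subst hr₃
        rfl
    · exact absurd (r₃.snd_mem_support_of_mem_edges hm) hdnr

end Aux

/-- deleting one of a pair of non-trivial twins preserves/reflects balancedness. -/
theorem balanced_iff_delete_twin {V : Type*} (G : SimpleGraph V)
    (hbip : G.Colorable 2) (u v : V) (huv : u ≠ v)
    (htwin : G.neighborSet u = G.neighborSet v) :
    BalancedGraph G ↔ BalancedGraph (G.induce {w | w ≠ u}) := by
  classical
  have hAdj : ∀ x, G.Adj u x ↔ G.Adj v x := fun x => by
    rw [← SimpleGraph.mem_neighborSet, ← SimpleGraph.mem_neighborSet, htwin]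
  constructor
  · rintro ⟨hcol, hcyc⟩
    refine ⟨SimpleGraph.Colorable.of_hom (SimpleGraph.Embedding.induce _).toHom hcol, ?_⟩
    intro w c hcI
    have h4 := hcyc (↑w) (c.map (SimpleGraph.Embedding.induce {w : V | w ≠ u}).toHom)
      (isInducedCycle_map _ hcI)
    exact (Walk.length_map _ c) ▸ h4
  · rintro ⟨_, hcyc⟩
    refine ⟨hbip, ?_⟩
    intro w c hcI
    by_cases hu : u ∈ c.support
    · by_cases hvs : v ∈ c.support
      · -- cycle through both twins: it has length exactly 4
        have hrotI : IsInducedCycle (c.rotate u hu) := by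
          refine ⟨hcI.1.rotate hu, ?_⟩
          intro x hx y hy hxy
          exact ((c.rotate_edges u hu).perm.mem_iff).mpr
            (hcI.2 x ((mem_support_rotate hcI.1 hu).mp hx)
              y ((mem_support_rotate hcI.1 hu).mp hy) hxy)
        have hv' : v ∈ (c.rotate u hu).support := (mem_support_rotate hcI.1 hu).mpr hvs
        have h4 := twin_cycle_length_eq_four huv hAdj hrotI hv'
        have hlen : (c.rotate u hu).length = c.length := by
          rw [← Walk.length_edges, ← Walk.length_edges]
          exact (c.rotate_edges u hu).perm.length_eq
        rw [← hlen, h4]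
      · -- cycle through u but not v: swap u and v to get a cycle avoiding u
        have hcI' : IsInducedCycle (c.map (twinIso huv hAdj).toEmbedding.toHom) :=
          isInducedCycle_map (twinIso huv hAdj).toEmbedding hcI
        have hS : ∀ z ∈ (c.map (twinIso huv hAdj).toEmbedding.toHom).support,
            z ∈ {w : V | w ≠ u} := by
          intro z hz
          rw [Walk.support_map, List.mem_map] at hz
          obtain ⟨z', hz', rfl⟩ := hz
          intro hzu
          apply hvs
          have hzu' : Equiv.swap u v z' = u := hzu
          have : z' = v := (Equiv.swap u v).injective
            (hzu'.trans (Equiv.swap_apply_right u v).symm)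
          rwa [← this]
        have h4 := hcyc _ _ (isInducedCycle_inducedWalk hS hcI')
        rwa [length_inducedWalk, Walk.length_map] at h4
    · -- cycle avoiding u: transfer directly
      have hS : ∀ z ∈ c.support, z ∈ {w : V | w ≠ u} := fun z hz hh => hu (hh ▸ hz)
      have h4 := hcyc _ _ (isInducedCycle_inducedWalk hS hcI)
      rwa [length_inducedWalk] at h4
end

section
/- Let l, t be positive integers with l = 2 or (l ≡ 0 mod 4 and l ≥ 8). Let A_{lt} be cyclic of order lt with generator a and S = {a^{il±1} : 0 ≤ i ≤ t−1}. Then Cay(A_{lt}, S) is isomorphic to the lexicographic product of the cycle C_l with the empty graph on t vertices (an (l,t)-cycle). -/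
/-- The lexicographic product of graphs. -/
def lexProd {α β : Type*} (X : SimpleGraph α) (Y : SimpleGraph β) : SimpleGraph (α × β) where
  Adj p q := X.Adj p.1 q.1 ∨ (p.1 = q.1 ∧ Y.Adj p.2 q.2)
  symm := by
    refine ⟨?_⟩
    rintro p q (h | ⟨h1, h2⟩)
    · exact Or.inl h.symm
    · exact Or.inr ⟨h1.symm, h2.symm⟩
  loopless := by
    refine ⟨?_⟩
    rintro p (h | ⟨_, h2⟩)
    · exact X.irrefl h
    · exact Y.irrefl h2

/-- The `(l,t)`-cycle: lexicographic product of the cycle `C_l` with the edgeless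
graph on `t` vertices. -/
def ltCycle (l t : ℕ) : SimpleGraph (Fin l × Fin t) :=
  lexProd (SimpleGraph.cycleGraph l) (⊥ : SimpleGraph (Fin t))

private lemma int_dvd_small {l : ℕ} (hl : 2 ≤ l) {d : ℤ} (hlo : -l ≤ d) (hhi : d ≤ l - 2)
    (hd : (l : ℤ) ∣ d) : d = 0 ∨ d = -l := by
  obtain ⟨c, rfl⟩ := hd
  have hl' : (2 : ℤ) ≤ l := by exact_mod_cast hl
  rcases lt_trichotomy c 0 with hc | rfl | hc
  · right
    have hc1 : c = -1 := by
      by_contra h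
      have h2 : c ≤ -2 := by omega
      nlinarith
    rw [hc1]; ring
  · left; ring
  · exfalso
    have h1 : 1 ≤ c := hc
    nlinarith

private lemma fin_sub_eq_one_iff {m : ℕ} (u v : Fin (m + 2)) :
    u - v = 1 ↔ ((m + 2 : ℕ) : ℤ) ∣ (u.val : ℤ) - v.val - 1 := by
  have hu : u.val < m + 2 := u.isLt
  have hv : v.val < m + 2 := v.isLt
  constructor
  · intro h
    have h' : u = 1 + v := by rwa [sub_eq_iff_eq_add] at h
    have hval : u.val = (1 + v.val) % (m + 2) := by
      rw [h', Fin.val_add, Fin.val_one]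
    rcases Nat.lt_or_ge (1 + v.val) (m + 2) with hlt | hge
    · rw [Nat.mod_eq_of_lt hlt] at hval
      exact ⟨0, by push_cast; omega⟩
    · have he : 1 + v.val = m + 2 := by omega
      rw [he, Nat.mod_self] at hval
      exact ⟨-1, by push_cast; omega⟩
  · intro hd
    have h2 : 2 ≤ m + 2 := by omega
    have hcase := int_dvd_small h2 (d := (u.val : ℤ) - v.val - 1)
      (by push_cast; omega) (by push_cast; omega) hd
    rw [sub_eq_iff_eq_add]
    apply Fin.ext
    rw [Fin.val_add, Fin.val_one]
    rcases hcase with h | h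
    · rw [Nat.mod_eq_of_lt (by omega)]; omega
    · rw [show 1 + v.val = m + 2 by omega, Nat.mod_self]; omega

/-- `Cay(A_{lt}, {a^{il±1} : 0 ≤ i ≤ t-1})` is isomorphic to the `(l,t)`-cycle. -/
theorem cayley_iso_ltCycle {G : Type*} [Group G] [Fintype G] (l t : ℕ)
    (hl : l = 2 ∨ (l % 4 = 0 ∧ 8 ≤ l)) (ht : 0 < t) (a : G)
    (hcard : Fintype.card G = l * t) (hgen : ∀ g : G, g ∈ Subgroup.zpowers a)
    (S : Set G) (hS : S = {x : G | ∃ i < t, x = a ^ (i * l) * a ∨ x = a ^ (i * l) * a⁻¹}) :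
    Nonempty (cayley S ≃g ltCycle l t) := by
  have hl2 : 2 ≤ l := by rcases hl with rfl | ⟨_, h⟩ <;> omega
  have hord : orderOf a = l * t := by
    rw [orderOf_eq_card_of_forall_mem_zpowers hgen, Nat.card_eq_fintype_card, hcard]
  -- characterization of membership in S
  have memS : ∀ k : ℤ, a ^ k ∈ S ↔ ((l : ℤ) ∣ k - 1 ∨ (l : ℤ) ∣ k + 1) := by
    intro k
    have hldvd : ((l : ℤ)) ∣ ((l * t : ℕ) : ℤ) := ⟨t, by push_cast; ring⟩
    constructor
    · intro hk
      rw [hS] at hk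
      obtain ⟨i, hi, hcase⟩ := hk
      rcases hcase with h | h
      · left
        have heq : a ^ k = a ^ (((i * l : ℕ) : ℤ) + 1) := by
          rw [h, zpow_add, zpow_one, zpow_natCast]
        have hmod := zpow_eq_zpow_iff_modEq.mp heq
        rw [hord] at hmod
        have h1 : (l : ℤ) ∣ (((i * l : ℕ) : ℤ) + 1) - k := dvd_trans hldvd hmod.dvd
        have h2 : (l : ℤ) ∣ ((i : ℤ) * l) := dvd_mul_left _ _
        have h3 : k - 1 = (i : ℤ) * l - ((((i * l : ℕ) : ℤ) + 1) - k) := by push_cast; ring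
        rw [h3]
        exact dvd_sub h2 h1
      · right
        have heq : a ^ k = a ^ (((i * l : ℕ) : ℤ) - 1) := by
          rw [h, zpow_sub, zpow_one, zpow_natCast]
        have hmod := zpow_eq_zpow_iff_modEq.mp heq
        rw [hord] at hmod
        have h1 : (l : ℤ) ∣ (((i * l : ℕ) : ℤ) - 1) - k := dvd_trans hldvd hmod.dvd
        have h2 : (l : ℤ) ∣ ((i : ℤ) * l) := dvd_mul_left _ _
        have h3 : k + 1 = (i : ℤ) * l - ((((i * l : ℕ) : ℤ) - 1) - k) := by push_cast; ring
        rw [h3]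
        exact dvd_sub h2 h1
    · rintro (⟨q, hq⟩ | ⟨q, hq⟩)
      · have ht' : (0 : ℤ) < (t : ℤ) := by exact_mod_cast ht
        set i : ℕ := (q % (t : ℤ)).toNat with hidef
        have hqm1 : 0 ≤ q % (t : ℤ) := Int.emod_nonneg q (by omega)
        have hqm2 : q % (t : ℤ) < t := Int.emod_lt_of_pos q ht'
        have hi' : (i : ℤ) = q % (t : ℤ) := Int.toNat_of_nonneg hqm1
        have hi : i < t := by omega
        have hE : (t : ℤ) * (q / (t : ℤ)) + q % (t : ℤ) = q := Int.mul_ediv_add_emod q t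
        rw [hS]
        refine ⟨i, hi, Or.inl ?_⟩
        have hdvd : ((l * t : ℕ) : ℤ) ∣ k - (((i * l : ℕ) : ℤ) + 1) := by
          refine ⟨q / (t : ℤ), ?_⟩
          push_cast
          rw [hi']
          linear_combination hq - (l : ℤ) * hE
        have hak : a ^ k = a ^ (((i * l : ℕ) : ℤ) + 1) := by
          apply zpow_eq_zpow_iff_modEq.mpr
          rw [hord]
          exact Int.ModEq.symm (Int.modEq_iff_dvd.mpr hdvd)
        rw [hak, zpow_add, zpow_one, zpow_natCast]
      · have ht' : (0 : ℤ) < (t : ℤ) := by exact_mod_cast ht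
        set i : ℕ := (q % (t : ℤ)).toNat with hidef
        have hqm1 : 0 ≤ q % (t : ℤ) := Int.emod_nonneg q (by omega)
        have hqm2 : q % (t : ℤ) < t := Int.emod_lt_of_pos q ht'
        have hi' : (i : ℤ) = q % (t : ℤ) := Int.toNat_of_nonneg hqm1
        have hi : i < t := by omega
        have hE : (t : ℤ) * (q / (t : ℤ)) + q % (t : ℤ) = q := Int.mul_ediv_add_emod q t
        rw [hS]
        refine ⟨i, hi, Or.inr ?_⟩
        have hdvd : ((l * t : ℕ) : ℤ) ∣ k - (((i * l : ℕ) : ℤ) - 1) := by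
          refine ⟨q / (t : ℤ), ?_⟩
          push_cast
          rw [hi']
          linear_combination hq - (l : ℤ) * hE
        have hak : a ^ k = a ^ (((i * l : ℕ) : ℤ) - 1) := by
          apply zpow_eq_zpow_iff_modEq.mpr
          rw [hord]
          exact Int.ModEq.symm (Int.modEq_iff_dvd.mpr hdvd)
        rw [hak, zpow_sub, zpow_one, zpow_natCast]
  -- the vertex map
  set f : Fin l × Fin t → G := fun p => a ^ (p.1.val + l * p.2.val) with hfdef
  have hbound : ∀ p : Fin l × Fin t, p.1.val + l * p.2.val < l * t := by
    intro p
    have h1 : p.1.val + l * p.2.val < l * (p.2.val + 1) := by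
      rw [Nat.mul_add, Nat.mul_one]
      have := p.1.isLt
      omega
    exact lt_of_lt_of_le h1 (Nat.mul_le_mul_left _ p.2.isLt)
  have hinj : Function.Injective f := by
    intro p q h
    have hmod : (p.1.val + l * p.2.val) ≡ (q.1.val + l * q.2.val) [MOD l * t] := by
      rw [← hord]
      exact pow_eq_pow_iff_modEq.mp h
    have heq : p.1.val + l * p.2.val = q.1.val + l * q.2.val := by
      unfold Nat.ModEq at hmod
      rwa [Nat.mod_eq_of_lt (hbound p), Nat.mod_eq_of_lt (hbound q)] at hmod
    have h3 : p.1.val = q.1.val := by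
      have := congrArg (· % l) heq
      simpa [Nat.add_mul_mod_self_left, Nat.mod_eq_of_lt p.1.isLt,
        Nat.mod_eq_of_lt q.1.isLt] using this
    have h4 : p.2.val = q.2.val := by
      have h5 : l * p.2.val = l * q.2.val := by omega
      exact Nat.eq_of_mul_eq_mul_left (by omega) h5
    exact Prod.ext (Fin.ext h3) (Fin.ext h4)
  have hbij : Function.Bijective f :=
    (Fintype.bijective_iff_injective_and_card f).mpr ⟨hinj, by simp [hcard]⟩
  -- the membership condition as a divisibility condition on first coordinates
  have hmem : ∀ p q : Fin l × Fin t, f p * (f q)⁻¹ ∈ S ↔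
      ((l : ℤ) ∣ (p.1.val : ℤ) - q.1.val - 1 ∨ (l : ℤ) ∣ (p.1.val : ℤ) - q.1.val + 1) := by
    intro p q
    have hfz : f p * (f q)⁻¹ =
        a ^ (((p.1.val + l * p.2.val : ℕ) : ℤ) - ((q.1.val + l * q.2.val : ℕ) : ℤ)) := by
      rw [zpow_sub, zpow_natCast, zpow_natCast]
    rw [hfz, memS]
    have key : ∀ e : ℤ,
        ((l : ℤ) ∣ (((p.1.val + l * p.2.val : ℕ) : ℤ) - ((q.1.val + l * q.2.val : ℕ) : ℤ)) + e) ↔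
        ((l : ℤ) ∣ (p.1.val : ℤ) - q.1.val + e) := by
      intro e
      have hD : (((p.1.val + l * p.2.val : ℕ) : ℤ) - ((q.1.val + l * q.2.val : ℕ) : ℤ)) + e =
          ((p.1.val : ℤ) - q.1.val + e) + (l : ℤ) * ((p.2.val : ℤ) - q.2.val) := by
        push_cast; ring
      rw [hD]
      exact dvd_add_left (Dvd.intro _ rfl)
    constructor
    · rintro (h | h)
      · exact Or.inl (by simpa [sub_eq_add_neg] using (key (-1)).mp (by simpa [sub_eq_add_neg] using h))
      · exact Or.inr ((key 1).mp h)
    · rintro (h | h)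
      · exact Or.inl (by simpa [sub_eq_add_neg] using (key (-1)).mpr (by simpa [sub_eq_add_neg] using h))
      · exact Or.inr ((key 1).mpr h)
  -- build the isomorphism
  refine ⟨(SimpleGraph.Iso.symm ⟨Equiv.ofBijective f hbij, ?_⟩ : cayley S ≃g ltCycle l t)⟩
  intro p q
  show (cayley S).Adj (f p) (f q) ↔ (ltCycle l t).Adj p q
  have hP : (ltCycle l t).Adj p q ↔
      ((l : ℤ) ∣ (p.1.val : ℤ) - q.1.val - 1 ∨ (l : ℤ) ∣ (p.1.val : ℤ) - q.1.val + 1) := by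
    obtain ⟨m, hm⟩ : ∃ m, l = m + 2 := ⟨l - 2, by omega⟩
    subst hm
    have hadj : (ltCycle (m + 2) t).Adj p q ↔ (SimpleGraph.cycleGraph (m + 2)).Adj p.1 q.1 := by
      simp [ltCycle, lexProd]
    rw [hadj, SimpleGraph.cycleGraph_adj, fin_sub_eq_one_iff, fin_sub_eq_one_iff]
    constructor
    · rintro (h | h)
      · exact Or.inl h
      · refine Or.inr ?_
        rw [show (p.1.val : ℤ) - q.1.val + 1 = -((q.1.val : ℤ) - p.1.val - 1) by ring, dvd_neg]
        exact h
    · rintro (h | h)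
      · exact Or.inl h
      · refine Or.inr ?_
        rw [show (q.1.val : ℤ) - p.1.val - 1 = -((p.1.val : ℤ) - q.1.val + 1) by ring, dvd_neg]
        exact h
  rw [hP]
  show (f p ≠ f q ∧ (f p * (f q)⁻¹ ∈ S ∨ f q * (f p)⁻¹ ∈ S)) ↔ _
  rw [hmem, hmem]
  constructor
  · rintro ⟨hne, (h | h) | (h | h)⟩
    · exact Or.inl h
    · exact Or.inr h
    · refine Or.inr ?_
      rw [show (p.1.val : ℤ) - q.1.val + 1 = -((q.1.val : ℤ) - p.1.val - 1) by ring, dvd_neg]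
      exact h
    · refine Or.inl ?_
      rw [show (p.1.val : ℤ) - q.1.val - 1 = -((q.1.val : ℤ) - p.1.val + 1) by ring, dvd_neg]
      exact h
  · intro h
    have hne1 : p.1.val ≠ q.1.val := by
      intro hc
      rcases h with h | h
      · rw [hc] at h
        simp only [sub_self, zero_sub] at h
        rw [dvd_neg] at h
        have := Int.le_of_dvd one_pos h
        omega
      · rw [hc] at h
        simp only [sub_self, zero_add] at h
        have := Int.le_of_dvd one_pos h
        omega
    have hne : f p ≠ f q := fun hc => hne1 (congrArg (fun r => r.1.val) (hinj hc))
    exact ⟨hne, Or.inl h⟩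
end

section
/- Every cubic bipartite graph containing two distinct vertices with identical neighborhoods is non-planar. -/
open SimpleGraph Finset


/-- `H` is a minor of `G`: there are disjoint nonempty connected branch sets in `G`,
one for each vertex of `H`, with edges of `G` joining branch sets of adjacent vertices. -/
def HasMinor {α β : Type*} (G : SimpleGraph α) (H : SimpleGraph β) : Prop :=
  ∃ B : β → Set α, (∀ b, (B b).Nonempty) ∧ (∀ b, (G.induce (B b)).Connected) ∧
    (Pairwise fun b b' => Disjoint (B b) (B b')) ∧
    ∀ b b', H.Adj b b' → ∃ u ∈ B b, ∃ v ∈ B b', G.Adj u v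

/-- Planarity, via Wagner's characterisation: no `K₅` and no `K_{3,3}` minor. -/
def PlanarG {α : Type*} (G : SimpleGraph α) : Prop :=
  ¬ HasMinor G (SimpleGraph.completeGraph (Fin 5)) ∧ ¬ HasMinor G (completeBipartiteGraph (Fin 3) (Fin 3))

lemma induce_singleton_connected {V : Type*} (G : SimpleGraph V) (x : V) :
    (G.induce {x}).Connected := by
  rw [connected_iff]
  refine ⟨fun a b => ?_, ⟨⟨x, rfl⟩⟩⟩
  have : a = b := Subtype.ext (a.2.trans b.2.symm)
  exact this ▸ Reachable.refl a

lemma induce_reachable_of_walk {V : Type*} {G : SimpleGraph V} {Wset : Set V} :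
    ∀ {x z : V} (p : G.Walk x z), (∀ y ∈ p.support, y ∈ Wset) →
      ∀ (hx : x ∈ Wset) (hz : z ∈ Wset),
        (G.induce Wset).Reachable ⟨x, hx⟩ ⟨z, hz⟩ := by
  intro x z p
  induction p with
  | nil => intro _ hx hz; exact Reachable.refl _
  | @cons x m z h q ih =>
    intro hp hx hz
    have hm : m ∈ Wset := hp m (by simp [SimpleGraph.Walk.support_cons])
    have hadj : (G.induce Wset).Adj ⟨x, hx⟩ ⟨m, hm⟩ := h
    exact hadj.reachable.trans
      (ih (fun y hy => hp y (by simp [SimpleGraph.Walk.support_cons, hy])) hm hz)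

set_option maxHeartbeats 2000000 in
/-- a cubic bipartite graph with a pair of distinct vertices having
identical neighbourhoods is non-planar. -/
theorem cubic_bipartite_twins_nonplanar {V : Type*} [Fintype V] (G : SimpleGraph V)
    (hcubic : ∀ v : V, (G.neighborSet v).ncard = 3) (hbip : G.Colorable 2)
    (u v : V) (huv : u ≠ v) (htwin : G.neighborSet u = G.neighborSet v) :
    ¬ PlanarG G := by
  classical
  obtain ⟨col⟩ := hbip
  obtain ⟨a, b, c, hab, hac, hbc, hN⟩ := Set.ncard_eq_three.mp (hcubic u)
  -- basic adjacencies
  have hua : G.Adj u a := by rw [← mem_neighborSet, hN]; simp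
  have hub : G.Adj u b := by rw [← mem_neighborSet, hN]; simp
  have huc : G.Adj u c := by rw [← mem_neighborSet, hN]; simp
  have hva : G.Adj v a := by rw [← mem_neighborSet, ← htwin, hN]; simp
  have hvb : G.Adj v b := by rw [← mem_neighborSet, ← htwin, hN]; simp
  have hvc : G.Adj v c := by rw [← mem_neighborSet, ← htwin, hN]; simp
  -- colors
  have colu : ∀ w : V, G.Adj u w → col w ≠ col u := fun w h => (col.valid h).symm
  have cb2 : ∀ w w' : V, col w ≠ col u → col w' ≠ col u → col w = col w' := by
    intro w w' h h'; omega
  have hcola : col a ≠ col u := colu a hua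
  have hcolb : col b ≠ col u := colu b hub
  have hcolc : col c ≠ col u := colu c huc
  -- u, v not in {a,b,c}
  have hu_not : u ∉ ({a, b, c} : Set V) := by rw [← hN]; exact G.notMem_neighborSet_self
  have hv_not : v ∉ ({a, b, c} : Set V) := by
    rw [← hN, htwin]; exact G.notMem_neighborSet_self
  have hua' : u ≠ a := fun h => hu_not (by simp [h])
  have hub' : u ≠ b := fun h => hu_not (by simp [h])
  have huc' : u ≠ c := fun h => hu_not (by simp [h])
  have hva' : v ≠ a := fun h => hv_not (by simp [h])
  have hvb' : v ≠ b := fun h => hv_not (by simp [h])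
  have hvc' : v ≠ c := fun h => hv_not (by simp [h])
  -- the set S
  set S : Set V := {u, v, a, b, c} with hS
  -- third neighbor of a
  have hthird : ∀ s : V, G.Adj u s → G.Adj v s → ∃ w, G.Adj s w ∧ w ∉ S ∧ col w = col u := by
    intro s hus hvs
    have hsub : ¬ (G.neighborSet s ⊆ {u, v}) := by
      intro hsub
      have h1 := Set.ncard_le_ncard hsub (Set.toFinite _)
      have h2 : ({u, v} : Set V).ncard ≤ 2 :=
        (Set.ncard_insert_le _ _).trans (by simp)
      rw [hcubic s] at h1; omega
    obtain ⟨w, hw1, hw2⟩ := Set.not_subset.mp hsub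
    refine ⟨w, hw1, ?_, ?_⟩
    · have hcw : col w ≠ col s := (col.valid hw1).symm
      have hcs : col s ≠ col u := colu s hus
      have hcwu : col w = col u := by omega
      simp only [hS, Set.mem_insert_iff, Set.mem_singleton_iff]
      push_neg
      refine ⟨fun h => hw2 (by simp [h]), fun h => hw2 (by simp [h]), ?_, ?_, ?_⟩
      · rintro rfl; exact hcola hcwu
      · rintro rfl; exact hcolb hcwu
      · rintro rfl; exact hcolc hcwu
    · have hcw : col w ≠ col s := (col.valid hw1).symm
      have hcs : col s ≠ col u := colu s hus
      omega
  obtain ⟨a', haa', ha'S, ha'col⟩ := hthird a hua hva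
  -- the component W of G - S containing a'
  set W : Set V := {w | ∃ p : G.Walk a' w, ∀ x ∈ p.support, x ∉ S} with hW
  have ha'W : a' ∈ W := ⟨Walk.nil, by simpa using ha'S⟩
  have hWS : ∀ w ∈ W, w ∉ S := by
    rintro w ⟨p, hp⟩; exact hp w p.end_mem_support
  have hWclosed : ∀ x ∈ W, ∀ z, G.Adj x z → z ∉ S → z ∈ W := by
    rintro x ⟨p, hp⟩ z hadj hz
    refine ⟨p.concat hadj, ?_⟩
    intro y hy
    rw [Walk.support_concat, List.mem_append] at hy
    rcases hy with hy | hy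
    · exact hp y hy
    · rwa [List.mem_singleton.mp hy]
  have hcolv : col v = col u := by
    have h1 := (col.valid hva).symm
    omega
  -- nonmembership in S, unpacked
  have hmemS : ∀ z : V, z ∈ S ↔ (z = u ∨ z = v ∨ z = a ∨ z = b ∨ z = c) := by
    intro z; simp [hS]
  -- the finsets
  set A : Finset V := Finset.univ.filter (fun w => w ∈ W ∧ col w = col u) with hA
  set Bf : Finset V := Finset.univ.filter (fun w => w ∈ W ∧ col w ≠ col u) with hBf
  set T : Finset V := ({a, b, c} : Finset V) with hT
  have hdeg : ∀ w : V, (G.neighborFinset w).card = 3 := by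
    intro w
    have h1 := hcubic w
    have h2 : ((G.neighborFinset w : Finset V) : Set V) = G.neighborSet w := by
      simp [neighborFinset]
    rwa [← h2, Set.ncard_coe_finset] at h1
  have hBnbr : ∀ y ∈ Bf, G.neighborFinset y ⊆ A := by
    intro y hy z hz
    rw [mem_neighborFinset] at hz
    rw [hBf, mem_filter] at hy
    obtain ⟨-, hyW, hycol⟩ := hy
    have hzcol : col z = col u := by have := (col.valid hz).symm; omega
    have hzS : z ∉ S := by
      rw [hmemS]
      push_neg
      refine ⟨?_, ?_, ?_, ?_, ?_⟩
      · intro h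
        rw [h] at hz
        have hy3 : y ∈ G.neighborSet u := hz.symm
        rw [hN] at hy3
        simp only [Set.mem_insert_iff, Set.mem_singleton_iff] at hy3
        exact hWS y hyW ((hmemS y).mpr (by tauto))
      · intro h
        rw [h] at hz
        have hy3 : y ∈ G.neighborSet u := by rw [htwin]; exact hz.symm
        rw [hN] at hy3
        simp only [Set.mem_insert_iff, Set.mem_singleton_iff] at hy3
        exact hWS y hyW ((hmemS y).mpr (by tauto))
      · rintro rfl; exact hcola hzcol
      · rintro rfl; exact hcolb hzcol
      · rintro rfl; exact hcolc hzcol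
    rw [hA, mem_filter]
    exact ⟨mem_univ z, hWclosed y hyW z hz hzS, hzcol⟩
  have hAnbr : ∀ w ∈ A, G.neighborFinset w ⊆ Bf ∪ T := by
    intro w hw z hz
    rw [mem_neighborFinset] at hz
    rw [hA, mem_filter] at hw
    obtain ⟨-, hwW, hwcol⟩ := hw
    have hzcol : col z ≠ col u := by have := (col.valid hz).symm; omega
    by_cases hzS : z ∈ S
    · rw [hmemS] at hzS
      have : z = a ∨ z = b ∨ z = c := by
        rcases hzS with h|h|h|h|h
        · exact absurd (h ▸ hzcol) (by simp)
        · exact absurd (h ▸ hzcol) (by simp [hcolv])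
        · exact Or.inl h
        · exact Or.inr (Or.inl h)
        · exact Or.inr (Or.inr h)
      exact mem_union_right _ (by rw [hT]; rcases this with h|h|h <;> simp [h])
    · exact mem_union_left _ (by
        rw [hBf, mem_filter]
        exact ⟨mem_univ z, hWclosed w hwW z hz hzS, hzcol⟩)
  have hdisjBT : Disjoint Bf T := by
    rw [Finset.disjoint_left]
    intro z hzB hzT
    rw [hBf, mem_filter] at hzB
    rw [hT] at hzT
    refine hWS z hzB.2.1 ((hmemS z).mpr ?_)
    simp only [Finset.mem_insert, Finset.mem_singleton] at hzT
    tauto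
  -- each vertex of A has its neighbours split between Bf and T
  have hsplit : ∀ w ∈ A, (Bf.filter (G.Adj w)).card + (T.filter (G.Adj w)).card = 3 := by
    intro w hw
    have hEq : G.neighborFinset w = (Bf ∪ T).filter (G.Adj w) := by
      ext z
      simp only [mem_neighborFinset, mem_filter]
      exact ⟨fun hz => ⟨hAnbr w hw ((mem_neighborFinset G w z).mpr hz), hz⟩, fun hz => hz.2⟩
    have h3 := hdeg w
    rwa [hEq, filter_union, card_union_of_disjoint (disjoint_filter_filter hdisjBT)] at h3
  -- double counting
  have hdc : ∀ P Q : Finset V,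
      ∑ w ∈ P, (Q.filter (G.Adj w)).card = ∑ y ∈ Q, (P.filter (G.Adj y)).card := by
    intro P Q
    simp only [Finset.card_filter]
    rw [Finset.sum_comm]
    refine Finset.sum_congr rfl fun y _ => Finset.sum_congr rfl fun w _ => ?_
    by_cases h : G.Adj w y
    · rw [if_pos h, if_pos h.symm]
    · rw [if_neg h, if_neg (fun h' => h h'.symm)]
  have hsum : 3 * A.card
      = ∑ w ∈ A, (Bf.filter (G.Adj w)).card + ∑ w ∈ A, (T.filter (G.Adj w)).card := by
    rw [← Finset.sum_add_distrib, Finset.sum_congr rfl hsplit, Finset.sum_const,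
      smul_eq_mul, mul_comm]
  have hBsum : ∑ w ∈ A, (Bf.filter (G.Adj w)).card = 3 * Bf.card := by
    rw [hdc A Bf]
    have heach : ∀ y ∈ Bf, (A.filter (G.Adj y)).card = 3 := by
      intro y hy
      have hEq : A.filter (G.Adj y) = G.neighborFinset y := by
        ext z
        simp only [mem_filter, mem_neighborFinset]
        exact ⟨fun h => h.2, fun h => ⟨hBnbr y hy ((mem_neighborFinset G y z).mpr h), h⟩⟩
      rw [hEq, hdeg]
    rw [Finset.sum_congr rfl heach, Finset.sum_const, smul_eq_mul, mul_comm]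
  have hTsum : ∑ w ∈ A, (T.filter (G.Adj w)).card
      = (A.filter (G.Adj a)).card + (A.filter (G.Adj b)).card + (A.filter (G.Adj c)).card := by
    rw [hdc A T, hT]
    rw [Finset.sum_insert (by simp [hab, hac]), Finset.sum_insert (by simp [hbc]),
      Finset.sum_singleton]
    omega
  have hle1 : ∀ s : V, G.Adj u s → G.Adj v s → (A.filter (G.Adj s)).card ≤ 1 := by
    intro s hus hvs
    refine Finset.card_le_one.mpr ?_
    intro z1 h1 z2 h2
    by_contra hne
    rw [mem_filter] at h1 h2
    obtain ⟨hz1A, hadj1⟩ := h1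
    obtain ⟨hz2A, hadj2⟩ := h2
    rw [hA, mem_filter] at hz1A hz2A
    have hz1S : z1 ∉ S := hWS z1 hz1A.2.1
    have hz2S : z2 ∉ S := hWS z2 hz2A.2.1
    have hz1u : z1 ≠ u := fun h => hz1S ((hmemS z1).mpr (Or.inl h))
    have hz1v : z1 ≠ v := fun h => hz1S ((hmemS z1).mpr (Or.inr (Or.inl h)))
    have hz2u : z2 ≠ u := fun h => hz2S ((hmemS z2).mpr (Or.inl h))
    have hz2v : z2 ≠ v := fun h => hz2S ((hmemS z2).mpr (Or.inr (Or.inl h)))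
    have hsub4 : ({u, v, z1, z2} : Finset V) ⊆ G.neighborFinset s := by
      intro x hx
      simp only [Finset.mem_insert, Finset.mem_singleton] at hx
      rw [mem_neighborFinset]
      rcases hx with rfl | rfl | rfl | rfl
      · exact hus.symm
      · exact hvs.symm
      · exact hadj1
      · exact hadj2
    have h4 : ({u, v, z1, z2} : Finset V).card = 4 := by
      rw [Finset.card_insert_of_notMem (by
          simp only [Finset.mem_insert, Finset.mem_singleton]
          push_neg
          exact ⟨huv, fun h => hz1u h.symm, fun h => hz2u h.symm⟩),
        Finset.card_insert_of_notMem (by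
          simp only [Finset.mem_insert, Finset.mem_singleton]
          push_neg
          exact ⟨fun h => hz1v h.symm, fun h => hz2v h.symm⟩),
        Finset.card_insert_of_notMem (by simpa using hne), Finset.card_singleton]
    have hle := Finset.card_le_card hsub4
    rw [h4, hdeg] at hle
    omega
  have hgea : 1 ≤ (A.filter (G.Adj a)).card := by
    refine Finset.card_pos.mpr ⟨a', ?_⟩
    rw [mem_filter, hA, mem_filter]
    exact ⟨⟨mem_univ _, ha'W, ha'col⟩, haa'⟩
  have hlea := hle1 a hua hva
  have hleb := hle1 b hub hvb
  have hlec := hle1 c huc hvc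
  have hbpos : 0 < (A.filter (G.Adj b)).card ∧ 0 < (A.filter (G.Adj c)).card := by
    rw [hBsum, hTsum] at hsum
    omega
  obtain ⟨wb, hwb⟩ := Finset.card_pos.mp hbpos.1
  obtain ⟨wc, hwc⟩ := Finset.card_pos.mp hbpos.2
  rw [mem_filter, hA, mem_filter] at hwb hwc
  have hwbW : wb ∈ W := hwb.1.2.1
  have hwcW : wc ∈ W := hwc.1.2.1
  have hbwb : G.Adj b wb := hwb.2
  have hcwc : G.Adj c wc := hwc.2
  -- non-membership of the five special vertices in W
  have hWu : u ∉ W := fun h => hWS u h ((hmemS u).mpr (Or.inl rfl))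
  have hWv : v ∉ W := fun h => hWS v h ((hmemS v).mpr (Or.inr (Or.inl rfl)))
  have hWa : a ∉ W := fun h => hWS a h ((hmemS a).mpr (by tauto))
  have hWb : b ∉ W := fun h => hWS b h ((hmemS b).mpr (by tauto))
  have hWc : c ∉ W := fun h => hWS c h ((hmemS c).mpr (by tauto))
  -- W is connected
  have hWconn : (G.induce W).Connected := by
    rw [connected_iff]
    refine ⟨?_, ⟨⟨a', ha'W⟩⟩⟩
    have hreach : ∀ z : W, (G.induce W).Reachable ⟨a', ha'W⟩ z := by
      rintro ⟨z, hzW⟩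
      obtain ⟨p, hp⟩ := hzW
      have hsupW : ∀ y ∈ p.support, y ∈ W := by
        intro y hy
        exact ⟨p.takeUntil y hy, fun x hx => hp x (p.support_takeUntil_subset hy hx)⟩
      exact induce_reachable_of_walk p hsupW ha'W ⟨p, hp⟩
    intro x y
    exact (hreach x).symm.trans (hreach y)
  -- build the K_{3,3} minor
  rintro ⟨-, h33⟩
  apply h33
  classical
  let L : Fin 3 → Set V := fun i => if i = 0 then {u} else if i = 1 then {v} else W
  let R : Fin 3 → Set V := fun i => if i = 0 then {a} else if i = 1 then {b} else {c}
  refine ⟨Sum.elim L R, ?_, ?_, ?_, ?_⟩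
  · rintro (i | i) <;> fin_cases i <;> simp [L, R]
    exact ⟨a', ha'W⟩
  · rintro (i | i) <;> fin_cases i <;>
      simp only [Sum.elim_inl, Sum.elim_inr, L, R, Fin.isValue, reduceIte] <;>
      first
        | exact induce_singleton_connected G _
        | exact hWconn
  · intro i j hij
    rcases i with i | i <;> rcases j with j | j <;> fin_cases i <;> fin_cases j <;>
      simp only [Sum.elim_inl, Sum.elim_inr, L, R, Fin.isValue, reduceIte] <;>
      first
        | exact absurd rfl hij
        | exact Set.disjoint_singleton.mpr huv
        | exact Set.disjoint_singleton.mpr huv.symm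
        | exact Set.disjoint_singleton.mpr hua'
        | exact Set.disjoint_singleton.mpr hub'
        | exact Set.disjoint_singleton.mpr huc'
        | exact Set.disjoint_singleton.mpr hva'
        | exact Set.disjoint_singleton.mpr hvb'
        | exact Set.disjoint_singleton.mpr hvc'
        | exact Set.disjoint_singleton.mpr hua'.symm
        | exact Set.disjoint_singleton.mpr hub'.symm
        | exact Set.disjoint_singleton.mpr huc'.symm
        | exact Set.disjoint_singleton.mpr hva'.symm
        | exact Set.disjoint_singleton.mpr hvb'.symm
        | exact Set.disjoint_singleton.mpr hvc'.symm
        | exact Set.disjoint_singleton.mpr hab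
        | exact Set.disjoint_singleton.mpr hac
        | exact Set.disjoint_singleton.mpr hbc
        | exact Set.disjoint_singleton.mpr hab.symm
        | exact Set.disjoint_singleton.mpr hac.symm
        | exact Set.disjoint_singleton.mpr hbc.symm
        | exact Set.disjoint_singleton_left.mpr hWu
        | exact Set.disjoint_singleton_left.mpr hWv
        | exact Set.disjoint_singleton_left.mpr hWa
        | exact Set.disjoint_singleton_left.mpr hWb
        | exact Set.disjoint_singleton_left.mpr hWc
        | exact Set.disjoint_singleton_right.mpr hWu
        | exact Set.disjoint_singleton_right.mpr hWv
        | exact Set.disjoint_singleton_right.mpr hWa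
        | exact Set.disjoint_singleton_right.mpr hWb
        | exact Set.disjoint_singleton_right.mpr hWc
  · intro i j hadj
    rcases i with i | i <;> rcases j with j | j
    case inl.inl => simp at hadj
    case inr.inr => simp at hadj
    · fin_cases i <;> fin_cases j <;> simp only [Sum.elim_inl, Sum.elim_inr, L, R, Fin.isValue, reduceIte]
      · exact ⟨u, rfl, a, rfl, hua⟩
      · exact ⟨u, rfl, b, rfl, hub⟩
      · exact ⟨u, rfl, c, rfl, huc⟩
      · exact ⟨v, rfl, a, rfl, hva⟩
      · exact ⟨v, rfl, b, rfl, hvb⟩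
      · exact ⟨v, rfl, c, rfl, hvc⟩
      · exact ⟨a', ha'W, a, rfl, haa'.symm⟩
      · exact ⟨wb, hwbW, b, rfl, hbwb.symm⟩
      · exact ⟨wc, hwcW, c, rfl, hcwc.symm⟩
    · fin_cases i <;> fin_cases j <;> simp only [Sum.elim_inl, Sum.elim_inr, L, R, Fin.isValue, reduceIte]
      · exact ⟨a, rfl, u, rfl, hua.symm⟩
      · exact ⟨a, rfl, v, rfl, hva.symm⟩
      · exact ⟨a, rfl, a', ha'W, haa'⟩
      · exact ⟨b, rfl, u, rfl, hub.symm⟩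
      · exact ⟨b, rfl, v, rfl, hvb.symm⟩
      · exact ⟨b, rfl, wb, hwbW, hbwb⟩
      · exact ⟨c, rfl, u, rfl, huc.symm⟩
      · exact ⟨c, rfl, v, rfl, hvc.symm⟩
      · exact ⟨c, rfl, wc, hwcW, hcwc⟩
end
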